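/- arXiv:1501.06353 — 4 statements merged into one kernel-verified Lean document; each statement's English description precedes it below -/
import Mathlib

section
/- (Lemma A.3 of the paper, base case n = 3.) Let i, j ∈ V with (j, i) ∈ A, and suppose W₃ = {i, j, k} (with k ∉ {i, j}) is obtained from the pair {i, j} by one exact generation step. Then there exists X ⊆ V with W₃ ⊆ X such that D[X] is a directed sub-block, the vertex i is reachable in D[W₃] from every other vertex of W₃, and i is reachable in D[X] from every other vertex of X. -/
open Set

variable {V : Type*}

/-- One arc step within the induced subgraph on the vertex set `S`. -/
def StepIn (A : V → V → Prop) (S : Set V) (u v : V) : Prop :=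
  u ∈ S ∧ v ∈ S ∧ A u v

/-- `v` is reachable from `u` by a directed path in the induced subgraph on `S`
(every vertex is reachable from itself, provided it lies in `S`). -/
def ReachIn (A : V → V → Prop) (S : Set V) (u v : V) : Prop :=
  u ∈ S ∧ Relation.ReflTransGen (StepIn A S) u v

/-- `IN(X)`: the set of vertices from which some member of `X` is reachable,
computed in the induced subgraph on `S`. -/
def InSet (A : V → V → Prop) (S : Set V) (X : Set V) : Set V :=
  {u | ∃ x ∈ X, ReachIn A S u x}

/-- `Z` is dynamically partitioning with respect to `X` and `Y`:
`IN(X) ∩ IN(Y) = ∅` computed in the induced subgraph `D − Z`. -/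
def DynPart (A : V → V → Prop) (X Y Z : Set V) : Prop :=
  InSet A Zᶜ X ∩ InSet A Zᶜ Y = ∅

/-- `StepsLe r n u v`: `v` can be reached from `u` in at most `n` `r`-steps. -/
def StepsLe (r : V → V → Prop) : ℕ → V → V → Prop
  | 0, u, v => u = v
  | n + 1, u, v => u = v ∨ ∃ w, r u w ∧ StepsLe r n w v

/-- `v` is reachable from `u` by a directed path using at most `n` arcs
in the induced subgraph on `S`. -/
def ReachInLe (A : V → V → Prop) (S : Set V) (n : ℕ) (u v : V) : Prop :=
  u ∈ S ∧ StepsLe (StepIn A S) n u v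

/-- `IN_a(X)` computed in the induced subgraph on `S`. -/
def InSetLe (A : V → V → Prop) (S : Set V) (a : ℕ) (X : Set V) : Set V :=
  {u | ∃ x ∈ X, ReachInLe A S a u x}

/-- The vertex `i` is cycle-partitioning at order `x` with respect to `X` and `Y`:
`IN_a(X) ∩ IN_b(Y) = ∅` in `D − {i}` for all `a + b = x`. -/
def CyclePart (A : V → V → Prop) (X Y : Set V) (i : V) (x : ℕ) : Prop :=
  ∀ a b : ℕ, a + b = x → InSetLe A {i}ᶜ a X ∩ InSetLe A {i}ᶜ b Y = ∅

/-- One adjacency step of the underlying (simple) graph of `D[W]`. -/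
def UStep (A : V → V → Prop) (W : Set V) (u v : V) : Prop :=
  u ∈ W ∧ v ∈ W ∧ u ≠ v ∧ (A u v ∨ A v u)

/-- The underlying graph of `D[W]` is connected. -/
def UConnected (A : V → V → Prop) (W : Set V) : Prop :=
  W.Nonempty ∧ ∀ u ∈ W, ∀ v ∈ W, Relation.ReflTransGen (UStep A W) u v

/-- The underlying graph of `D[W]` is biconnected: at least 3 vertices, connected,
and deleting any single vertex leaves a connected graph. -/
def Biconnected (A : V → V → Prop) (W : Set V) : Prop :=
  3 ≤ W.ncard ∧ UConnected A W ∧ ∀ v ∈ W, UConnected A (W \ {v})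

/-- `D[W]` is a directed sub-block: some vertex of `W` is reachable in `D[W]` from
every other vertex of `W`, and the underlying graph of `D[W]` is biconnected. -/
def DirectedSubBlock (A : V → V → Prop) (W : Set V) : Prop :=
  (∃ i ∈ W, ∀ j ∈ W, ReachIn A W j i) ∧ Biconnected A W

/-- A directed sub-block is a transmission block iff it is maximal. -/
def TransmissionBlock (A : V → V → Prop) (W : Set V) : Prop :=
  DirectedSubBlock A W ∧ ∀ U : Set V, W ⊂ U → ¬ DirectedSubBlock A U

/-- A connected pair: a two-element set `{i, j}` with an arc between `i` and `j`. -/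
def ConnectedPair (A : V → V → Prop) (W : Set V) : Prop :=
  ∃ i j : V, i ≠ j ∧ W = {i, j} ∧ (A i j ∨ A j i)

/-- `W'` is obtained from `W` by one exact generation step. -/
def ExactStep (A : V → V → Prop) (W W' : Set V) : Prop :=
  ∃ k, k ∉ W ∧ W' = W ∪ {k} ∧ ∃ j ∈ W, A k j ∧ ¬ DynPart A {k} (W \ {j}) {j}

/-- `W` is the last term of a finite chain of exact generation steps whose
first term is a connected pair. -/
def GeneratedFromPair (A : V → V → Prop) (W : Set V) : Prop :=
  ∃ P : Set V, ConnectedPair A P ∧ Relation.ReflTransGen (ExactStep A) P W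

/-- `W'` is obtained from `W` by one order-`x` cycle generation step. -/
def CycleStep (A : V → V → Prop) (x : ℕ) (W W' : Set V) : Prop :=
  ∃ k, k ∉ W ∧ W' = W ∪ {k} ∧ ∃ j ∈ W, A k j ∧ ¬ CyclePart A {k} (W \ {j}) j x

/-- `W` is the last term of a finite chain of order-`x` cycle generation steps
whose first term is a connected pair. -/
def XGenerable (A : V → V → Prop) (x : ℕ) (W : Set V) : Prop :=
  ∃ P : Set V, ConnectedPair A P ∧ Relation.ReflTransGen (CycleStep A x) P W


section Stmt5Aux

variable {V : Type*}

/-- Suffix of a chain starting at a given member. -/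
lemma suffix_path {r : V → V → Prop} {l : List V} {v : V}
    (hc : l.Chain' r) (hv : l.getLast? = some v) {x : V} (hx : x ∈ l) :
    ∃ l', l' <:+ l ∧ l'.Chain' r ∧ l'.head? = some x ∧ l'.getLast? = some v := by
  induction l with
  | nil => simp at hx
  | cons a t ih =>
    rcases List.mem_cons.1 hx with rfl | hx
    · exact ⟨x :: t, List.suffix_rfl, hc, rfl, hv⟩
    · have ht : t ≠ [] := by rintro rfl; simp at hx
      obtain ⟨b, t', rfl⟩ := List.exists_cons_of_ne_nil ht
      have hv' : (b :: t').getLast? = some v := by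
        rwa [List.getLast?_cons_cons] at hv
      obtain ⟨l', hs, h1, h2, h3⟩ := ih hc.tail hv' hx
      exact ⟨l', hs.trans (List.suffix_cons a _), h1, h2, h3⟩

/-- A chain from u to v gives reflexive-transitive reachability. -/
lemma rtg_of_chain {r : V → V → Prop} {l : List V} {u v : V}
    (hc : l.Chain' r) (hu : l.head? = some u) (hv : l.getLast? = some v) :
    Relation.ReflTransGen r u v := by
  induction l generalizing u with
  | nil => simp at hu
  | cons a t ih =>
    have hau : a = u := by simpa using hu
    subst hau
    cases t with
    | nil =>
      have : a = v := by simpa using hv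
      exact this ▸ Relation.ReflTransGen.refl
    | cons b t' =>
      have hr : r a b := (List.isChain_cons_cons.1 hc).1
      have h2 := ih (List.isChain_cons_cons.1 hc).2 rfl
        (by rwa [List.getLast?_cons_cons] at hv)
      exact Relation.ReflTransGen.head hr h2

/-- Extraction of a nodup (simple) path from reachability. -/
lemma exists_nodup_path {r : V → V → Prop} {u v : V}
    (h : Relation.ReflTransGen r u v) :
    ∃ l : List V, l.Chain' r ∧ l.head? = some u ∧ l.getLast? = some v ∧ l.Nodup := by
  induction h using Relation.ReflTransGen.head_induction_on with
  | refl => exact ⟨[v], List.isChain_singleton v, rfl, rfl, by simp⟩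
  | head hr _ ih =>
    rename_i a b _
    obtain ⟨l, hc, hh, hl, hnd⟩ := ih
    by_cases hmem : a ∈ l
    · obtain ⟨l', hs, h1, h2, h3⟩ := suffix_path hc hl hmem
      exact ⟨l', h1, h2, h3, hnd.sublist hs.sublist⟩
    · refine ⟨a :: l, ?_, rfl, ?_, by simp [hnd, hmem]⟩
      · refine List.isChain_cons.2 ⟨?_, hc⟩
        intro y hy
        have : b = y := by rw [hh] at hy; simpa using hy
        exact this ▸ hr
      · have hne : l ≠ [] := by rintro rfl; simp at hh
        obtain ⟨c, t, rfl⟩ := List.exists_cons_of_ne_nil hne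
        rwa [List.getLast?_cons_cons]

/-- All members of a `StepIn` chain whose head is in `S` lie in `S`. -/
lemma mem_of_chain_stepIn {A : V → V → Prop} {S : Set V} {l : List V} {u : V}
    (hc : l.Chain' (StepIn A S)) (hh : l.head? = some u) (hu : u ∈ S) :
    ∀ x ∈ l, x ∈ S := by
  induction l generalizing u with
  | nil => simp
  | cons a t ih =>
    have hau : a = u := by simpa using hh
    subst hau
    intro x hx
    rcases List.mem_cons.1 hx with rfl | hx
    · exact hu
    · cases t with
      | nil => simp at hx
      | cons b t' =>
        have hb : b ∈ S := (List.isChain_cons_cons.1 hc).1.2.1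
        exact ih (List.isChain_cons_cons.1 hc).2 rfl hb x hx

/-- Transfer a `StepIn` chain to another vertex set containing all members. -/
lemma chain_stepIn_mono {A : V → V → Prop} {S X : Set V} {l : List V}
    (hc : l.Chain' (StepIn A S)) (hX : ∀ x ∈ l, x ∈ X) :
    l.Chain' (StepIn A X) := by
  induction l with
  | nil => exact List.isChain_nil
  | cons a t ih =>
    cases t with
    | nil => exact List.isChain_singleton _
    | cons b t' =>
      refine List.isChain_cons_cons.2 ⟨⟨hX a (by simp), hX b (by simp), ?_⟩, ?_⟩
      · exact (List.isChain_cons_cons.1 hc).1.2.2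
      · exact ih (List.isChain_cons_cons.1 hc).2 (fun x hx => hX x (List.mem_cons_of_mem a hx))

/-- Two paths from a common origin can be trimmed to paths from a common
vertex `w` that meet only at `w`. -/
lemma findW {r : V → V → Prop} (n : ℕ) :
    ∀ (P Q : List V) (u k i : V), P.length ≤ n →
    P.Chain' r → P.head? = some u → P.getLast? = some k → P.Nodup →
    Q.Chain' r → Q.head? = some u → Q.getLast? = some i → Q.Nodup →
    ∃ (w : V) (P' Q' : List V), (P'.Chain' r ∧ P'.head? = some w ∧ P'.getLast? = some k ∧ P'.Nodup) ∧
      (Q'.Chain' r ∧ Q'.head? = some w ∧ Q'.getLast? = some i ∧ Q'.Nodup) ∧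
      (∀ x, x ∈ P' → x ∈ Q' → x = w) ∧ (∀ x ∈ P', x ∈ P) ∧ (∀ x ∈ Q', x ∈ Q) := by
  induction n with
  | zero =>
    intro P Q u k i hlen _ hh _ _ _ _ _ _
    interval_cases hP : P.length
    · rw [List.length_eq_zero_iff] at hP; subst hP; simp at hh
  | succ n ih =>
    intro P Q u k i hlen hPc hPh hPl hPnd hQc hQh hQl hQnd
    obtain ⟨a, t, rfl⟩ : ∃ a t, P = a :: t := by
      cases P with
      | nil => simp at hPh
      | cons a t => exact ⟨a, t, rfl⟩
    have hau : a = u := by simpa using hPh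
    subst hau
    by_cases hdisj : ∀ x ∈ t, x ∉ Q
    · refine ⟨a, a :: t, Q, ⟨hPc, rfl, hPl, hPnd⟩, ⟨hQc, hQh, hQl, hQnd⟩, ?_, fun x hx => hx, fun x hx => hx⟩
      intro x hxP hxQ
      rcases List.mem_cons.1 hxP with rfl | hxt
      · rfl
      · exact absurd hxQ (hdisj x hxt)
    · push_neg at hdisj
      obtain ⟨x, hxt, hxQ⟩ := hdisj
      have ht : t ≠ [] := by rintro rfl; simp at hxt
      have htl : t.getLast? = some k := by
        obtain ⟨b, t', rfl⟩ := List.exists_cons_of_ne_nil ht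
        rwa [List.getLast?_cons_cons] at hPl
      obtain ⟨P₂, hP₂s, hP₂c, hP₂h, hP₂l⟩ := suffix_path hPc.tail htl hxt
      obtain ⟨Q₂, hQ₂s, hQ₂c, hQ₂h, hQ₂l⟩ := suffix_path hQc hQl hxQ
      have hP₂len : P₂.length ≤ n := by
        have h1 := hP₂s.sublist.length_le
        have h1' : P₂.length ≤ t.length := List.Sublist.length_le (List.IsSuffix.sublist hP₂s)
        have h2 : t.length + 1 ≤ n + 1 := hlen
        omega
      obtain ⟨w, P', Q', h1, h2, h3, h4, h5⟩ := ih P₂ Q₂ x k i hP₂len hP₂c hP₂h hP₂l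
        (hPnd.sublist (hP₂s.sublist.trans (List.sublist_cons_self a t)))
        hQ₂c hQ₂h hQ₂l (hQnd.sublist hQ₂s.sublist)
      exact ⟨w, P', Q', h1, h2, h3,
        fun y hy => List.mem_cons_of_mem a (hP₂s.subset (h4 y hy)),
        fun y hy => hQ₂s.subset (h5 y hy)⟩

lemma ustep_symm {A : V → V → Prop} {W : Set V} : Symmetric (UStep A W) := by
  rintro x y ⟨h1, h2, h3, h4⟩; exact ⟨h2, h1, h3.symm, h4.symm⟩

lemma cycle_biconnected [Fintype V] (A : V → V → Prop) (n : ℕ) (hn3 : 3 ≤ n)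
    (f : ZMod n → V) (hf : Function.Injective f)
    (hadj : ∀ t : ZMod n, f t ≠ f (t + 1) ∧ (A (f t) (f (t + 1)) ∨ A (f (t + 1)) (f t))) :
    Biconnected A (Set.range f) := by
  haveI : NeZero n := ⟨by omega⟩
  set X := Set.range f with hX
  have hstepX : ∀ t : ZMod n, UStep A X (f t) (f (t + 1)) :=
    fun t => ⟨⟨t, rfl⟩, ⟨t + 1, rfl⟩, (hadj t).1, (hadj t).2⟩
  have hwalk : ∀ (s : ZMod n) (m : ℕ), Relation.ReflTransGen (UStep A X) (f s) (f (s + m)) := by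
    intro s m
    induction m with
    | zero => simpa using Relation.ReflTransGen.refl
    | succ m ih =>
      refine ih.tail ?_
      have h1 : s + ((m + 1 : ℕ) : ZMod n) = (s + (m : ZMod n)) + 1 := by push_cast; ring
      rw [h1]
      exact hstepX (s + m)
  have hconn : UConnected A X := by
    refine ⟨⟨f 0, 0, rfl⟩, ?_⟩
    rintro u ⟨a, rfl⟩ v ⟨b, rfl⟩
    have := hwalk a (b - a).val
    rwa [ZMod.natCast_val, ZMod.cast_id, add_sub_cancel] at this
  refine ⟨?_, hconn, ?_⟩
  · have : X.ncard = n := by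
      rw [hX, ← Set.image_univ, Set.ncard_image_of_injective _ hf, Set.ncard_univ,
        Nat.card_eq_fintype_card, ZMod.card]
    omega
  · rintro v ⟨s, rfl⟩
    have hne : ∀ m : ℕ, 1 ≤ m → m ≤ n - 1 → f (s + (m : ZMod n)) ≠ f s := by
      intro m h1 h2 hEq
      have h0 : s + (m : ZMod n) = s := hf hEq
      have h0' : ((m : ℕ) : ZMod n) = 0 := by
        have := congrArg (fun z => z - s) h0
        simpa using this
      have hval := congrArg ZMod.val h0'
      rw [ZMod.val_natCast, ZMod.val_zero, Nat.mod_eq_of_lt (by omega)] at hval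
      omega
    have hmem : ∀ m : ℕ, 1 ≤ m → m ≤ n - 1 → f (s + (m : ZMod n)) ∈ X \ {f s} :=
      fun m h1 h2 => ⟨⟨s + m, rfl⟩, hne m h1 h2⟩
    have hwalk' : ∀ m : ℕ, 1 ≤ m → m ≤ n - 1 →
        Relation.ReflTransGen (UStep A (X \ {f s})) (f (s + ((1:ℕ) : ZMod n)))
          (f (s + (m : ZMod n))) := by
      intro m h1 h2
      induction m with
      | zero => omega
      | succ m ih =>
        rcases Nat.eq_or_lt_of_le h1 with h | h
        · obtain rfl : m = 0 := by omega
          exact Relation.ReflTransGen.refl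
        · have hm1 : 1 ≤ m := by omega
          have hm2 : m ≤ n - 1 := by omega
          refine (ih hm1 hm2).tail ?_
          have hrw : s + ((m + 1 : ℕ) : ZMod n) = (s + (m : ZMod n)) + 1 := by
            push_cast; ring
          have hmem1 := hmem m hm1 hm2
          have hmem2 := hmem (m + 1) (by omega) h2
          rw [hrw] at hmem2
          rw [hrw]
          exact ⟨hmem1, hmem2, (hadj _).1, (hadj _).2⟩
    have key : ∀ u ∈ X \ {f s},
        Relation.ReflTransGen (UStep A (X \ {f s})) (f (s + ((1:ℕ) : ZMod n))) u := by
      rintro u ⟨⟨a, rfl⟩, ha⟩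
      have hane : a ≠ s := fun h => ha (by rw [h]; rfl)
      have hsub : a - s ≠ 0 := sub_ne_zero.2 hane
      have hv1 : 1 ≤ (a - s).val := by
        rcases Nat.eq_zero_or_pos (a - s).val with h | h
        · exact absurd (ZMod.val_eq_zero _ |>.1 h) hsub
        · exact h
      have hv2 : (a - s).val ≤ n - 1 := by have := ZMod.val_lt (a - s); omega
      have := hwalk' (a - s).val hv1 hv2
      rwa [ZMod.natCast_val, ZMod.cast_id, add_sub_cancel] at this
    refine ⟨⟨f (s + ((1:ℕ) : ZMod n)), hmem 1 le_rfl (by omega)⟩, ?_⟩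
    intro u hu v hv
    haveI : Std.Symm (UStep A (X \ {f s})) := ⟨fun a b h => ustep_symm h⟩
    exact ((Std.Symm.symm _ _ (key u hu) : Relation.ReflTransGen _ _ _)).trans (key v hv)

lemma list_cycle_biconnected [Fintype V] (A : V → V → Prop) (c : List V)
    (hnd : c.Nodup) (h3 : 3 ≤ c.length)
    (hch : c.Chain' (fun u v => u ≠ v ∧ (A u v ∨ A v u)))
    (hne : c ≠ [])
    (hwrap : c.getLast hne ≠ c.head hne ∧
      (A (c.getLast hne) (c.head hne) ∨ A (c.head hne) (c.getLast hne))) :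
    Biconnected A {x | x ∈ c} := by
  set n := c.length with hn
  haveI : NeZero n := ⟨by omega⟩
  set f : ZMod n → V := fun t => c.get ⟨t.val, ZMod.val_lt t⟩ with hfdef
  have hrange : Set.range f = {x | x ∈ c} := by
    ext x
    constructor
    · rintro ⟨t, rfl⟩; exact List.get_mem _ _
    · intro hx
      obtain ⟨idx, hidx⟩ := List.mem_iff_get.1 hx
      refine ⟨(idx : ℕ), ?_⟩
      have hv : (((idx : ℕ) : ZMod n)).val = (idx : ℕ) := by
        rw [ZMod.val_natCast, Nat.mod_eq_of_lt idx.isLt]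
      simp only [hfdef]
      rw [← hidx]
      congr 1
      exact Fin.ext hv
  have hf : Function.Injective f := by
    intro t t' h
    have := List.nodup_iff_injective_get.1 hnd h
    exact ZMod.val_injective n (by simpa using congrArg Fin.val this)
  have hadj : ∀ t : ZMod n, f t ≠ f (t + 1) ∧ (A (f t) (f (t + 1)) ∨ A (f (t + 1)) (f t)) := by
    intro t
    have hvlt : t.val < n := ZMod.val_lt t
    haveI : Fact (1 < n) := ⟨by omega⟩
    have ht1 : (t + 1).val = (t.val + 1) % n := by
      rw [ZMod.val_add, ZMod.val_one]
    by_cases hcase : t.val + 1 < n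
    · have hv1 : (t + 1).val = t.val + 1 := by rw [ht1, Nat.mod_eq_of_lt hcase]
      have := (List.isChain_iff_getElem.1 hch) t.val (by omega)
      have hfe : f (t + 1) = c.get ⟨t.val + 1, by omega⟩ := by
        simp only [hfdef]; congr 1; exact Fin.ext hv1
      rw [hfe]
      exact this
    · have hveq : t.val = n - 1 := by omega
      have hv1 : (t + 1).val = 0 := by rw [ht1, hveq]; simp [Nat.sub_add_cancel (by omega : 1 ≤ n)]
      have hflast : f t = c.getLast hne := by
        simp only [hfdef]
        rw [List.getLast_eq_getElem]
        simp only [List.get_eq_getElem, hveq]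
        rfl
      have hfhead : f (t + 1) = c.head hne := by
        simp only [hfdef]
        rw [← List.get_mk_zero (by omega : 0 < c.length)]
        · congr 1
          exact Fin.ext hv1
      rw [hflast, hfhead]
      exact hwrap
  have := cycle_biconnected A n h3 f hf hadj
  rwa [hrange] at this

/-- Consecutive elements of a nodup chain are distinct. -/
lemma chain'_ne_of_nodup {l : List V} (hnd : l.Nodup) {r : V → V → Prop}
    (h : l.Chain' r) : l.Chain' (fun u v => u ≠ v ∧ r u v) := by
  unfold List.Chain' at h ⊢
  rw [List.isChain_iff_getElem] at h ⊢
  intro i hi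
  refine ⟨fun he => ?_, h i hi⟩
  have := (List.Nodup.getElem_inj_iff hnd).1 he
  omega

lemma glue_cycle [Fintype V] (A : V → V → Prop) {P' Q' : List V} {w a b m : V}
    (hPc : P'.Chain' (fun u v => A u v)) (hPh : P'.head? = some w)
    (hPl : P'.getLast? = some a) (hPnd : P'.Nodup)
    (hQc : Q'.Chain' (fun u v => A u v)) (hQh : Q'.head? = some w)
    (hQl : Q'.getLast? = some b) (hQnd : Q'.Nodup)
    (hint : ∀ x, x ∈ P' → x ∈ Q' → x = w)
    (hmP : m ∉ P') (hmQ : m ∉ Q')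
    (ham : a ≠ m) (haA : A a m ∨ A m a)
    (hmb : m ≠ b) (hbA : A m b ∨ A b m)
    (hab : a ≠ b) :
    Biconnected A {x | x ∈ P' ∨ x = m ∨ x ∈ Q'} := by
  obtain ⟨q, rfl⟩ : ∃ q, Q' = w :: q := by
    cases Q' with
    | nil => simp at hQh
    | cons x t =>
      have hxw : x = w := by simpa using hQh
      exact ⟨t, by rw [hxw]⟩
  have hPne : P' ≠ [] := by rintro rfl; simp at hPh
  have hwP : w ∈ P' := by
    cases P' with
    | nil => simp at hPh
    | cons x t =>
      have hxw : x = w := by simpa using hPh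
      simp [← hxw]
  have haP : a ∈ P' := by
    have h2 := Option.some.inj ((hPl.symm).trans (List.getLast?_eq_getLast hPne))
    rw [h2]; exact List.getLast_mem hPne
  have hwq : w ∉ q := (List.nodup_cons.1 hQnd).1
  have hqnd : q.Nodup := (List.nodup_cons.1 hQnd).2
  set c : List V := P' ++ m :: q.reverse with hc
  have hcne : c ≠ [] := by simp [hc]
  -- membership description
  have hcmem : ∀ x, x ∈ c ↔ (x ∈ P' ∨ x = m ∨ x ∈ w :: q) := by
    intro x
    simp only [hc, List.mem_append, List.mem_cons, List.mem_reverse]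
    constructor
    · rintro (h | h | h)
      · exact Or.inl h
      · exact Or.inr (Or.inl h)
      · exact Or.inr (Or.inr (Or.inr h))
    · rintro (h | h | h | h)
      · exact Or.inl h
      · exact Or.inr (Or.inl h)
      · exact Or.inl (h ▸ hwP)
      · exact Or.inr (Or.inr h)
  -- nodup
  have hcnd : c.Nodup := by
    rw [hc, List.nodup_append]
    refine ⟨hPnd, ?_, ?_⟩
    · rw [List.nodup_cons]
      exact ⟨fun h => hmQ (by simp [List.mem_reverse.1 h]), List.nodup_reverse.2 hqnd⟩
    · intro x hxP y hx2 hxy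
      subst hxy
      rcases List.mem_cons.1 hx2 with rfl | hxq
      · exact hmP hxP
      · have hxq' := List.mem_reverse.1 hxq
        have : x = w := hint x hxP (by simp [hxq'])
        exact hwq (this ▸ hxq')
  -- length
  have hc3 : 3 ≤ c.length := by
    have hlP : 1 ≤ P'.length := by
      cases P' with
      | nil => exact absurd rfl hPne
      | cons x t => simp
    have : ¬ (P'.length = 1 ∧ q.length = 0) := by
      rintro ⟨h1, h2⟩
      obtain ⟨x, rfl⟩ := List.length_eq_one_iff.1 h1
      have hxw : x = w := by simpa using hPh
      have hxa : x = a := by simpa using hPl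
      rw [List.length_eq_zero_iff] at h2
      subst h2
      have hwb : w = b := by simpa using hQl
      exact hab (hxa ▸ hxw ▸ hwb ▸ rfl)
    have : c.length = P'.length + 1 + q.length := by simp [hc]; omega
    omega
  -- chain
  set R : V → V → Prop := fun u v => u ≠ v ∧ (A u v ∨ A v u) with hR
  have hRsymm : ∀ {u v}, R u v → R v u := by
    rintro u v ⟨h1, h2⟩; exact ⟨h1.symm, h2.symm⟩
  have hPR : P'.Chain' R := by
    have := chain'_ne_of_nodup hPnd hPc
    exact this.imp (fun u v h => ⟨h.1, Or.inl h.2⟩)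
  have hQR : (w :: q).Chain' R := by
    have := chain'_ne_of_nodup hQnd hQc
    exact this.imp (fun u v h => ⟨h.1, Or.inl h.2⟩)
  have hqrevR : q.reverse.Chain' R := by
    refine List.isChain_reverse.2 ?_
    exact (hQR.tail).imp (fun u v h => hRsymm h)
  have hqrevh : q ≠ [] → q.reverse.head? = some b := by
    intro hq
    rw [List.head?_reverse]
    obtain ⟨x, t, rfl⟩ := List.exists_cons_of_ne_nil hq
    rwa [List.getLast?_cons_cons] at hQl
  have hcch : c.Chain' R := by
    rw [hc]
    refine hPR.append ?_ ?_
    · refine List.isChain_cons.2 ?_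
      refine ⟨?_, hqrevR⟩
      intro y hy
      have hq : q ≠ [] := by rintro rfl; simp at hy
      rw [hqrevh hq] at hy
      have hyb : y = b := by injection hy with h; exact h.symm
      rw [hyb]
      exact ⟨hmb, hbA⟩
    · intro x hx y hy
      have hxa : x = a := by rw [hPl] at hx; injection hx with h; exact h.symm
      have hym : y = m := by
        simp only [List.head?_cons] at hy
        injection hy with h; exact h.symm
      rw [hxa, hym]
      exact ⟨ham, haA⟩
  -- head and last of c
  have hch' : c.head? = some w := by
    rw [hc, List.head?_append, hPh]
    rfl
  have hchead : c.head hcne = w := by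
    rw [List.head?_eq_head hcne] at hch'
    injection hch'
  have hwrap : R (c.getLast hcne) (c.head hcne) := by
    rw [hchead]
    cases hq : q with
    | nil =>
      have hbw : w = b := by
        subst hq
        simpa using hQl
      have hcl : c.getLast? = some m := by
        rw [hc, hq, List.getLast?_append]
        rfl
      have : c.getLast hcne = m := by
        rw [List.getLast?_eq_getLast hcne] at hcl
        injection hcl
      rw [this]
      have hRmb : R m b := ⟨hmb, hbA⟩
      rw [← hbw] at hRmb
      exact hRmb
    | cons x t =>
      have hcl : c.getLast? = some x := by
        rw [hc, hq, List.getLast?_append]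
        have : (m :: (x :: t).reverse).getLast? = (x :: t).reverse.getLast? := by
          obtain ⟨y, l, hyl⟩ : ∃ y l, (x :: t).reverse = y :: l := by
            cases hrev : (x :: t).reverse with
            | nil => exact absurd hrev (by simp)
            | cons y l => exact ⟨y, l, rfl⟩
          rw [hyl, List.getLast?_cons_cons]
        rw [this, List.getLast?_reverse]
        rfl
      have hceq : c.getLast hcne = x := by
        rw [List.getLast?_eq_getLast hcne] at hcl
        injection hcl
      rw [hceq]
      have : R w x := by
        rw [hq] at hQR
        exact (List.isChain_cons_cons.1 hQR).1
      exact hRsymm this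
  have hbic := list_cycle_biconnected A c hcnd hc3 hcch hcne hwrap
  have hset : {x | x ∈ c} = {x | x ∈ P' ∨ x = m ∨ x ∈ w :: q} := Set.ext fun x => hcmem x
  rwa [hset] at hbic

lemma assemble [Fintype V] (A : V → V → Prop) {S : Set V} {P' Q' : List V} {w a b m : V}
    (hPc : P'.Chain' (StepIn A S)) (hPh : P'.head? = some w)
    (hPl : P'.getLast? = some a) (hPnd : P'.Nodup)
    (hQc : Q'.Chain' (StepIn A S)) (hQh : Q'.head? = some w)
    (hQl : Q'.getLast? = some b) (hQnd : Q'.Nodup)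
    (hint : ∀ x, x ∈ P' → x ∈ Q' → x = w)
    (hmP : m ∉ P') (hmQ : m ∉ Q')
    (ham : a ≠ m) (haA : A a m ∨ A m a)
    (hmb : m ≠ b) (hbA : A m b ∨ A b m)
    (hab : a ≠ b) :
    ∃ X : Set V, a ∈ X ∧ b ∈ X ∧ m ∈ X ∧ Biconnected A X ∧
      ∀ v ∈ X, Relation.ReflTransGen (StepIn A X) v a ∨ v = m ∨
        Relation.ReflTransGen (StepIn A X) v b := by
  set X : Set V := {x | x ∈ P' ∨ x = m ∨ x ∈ Q'} with hXdef
  have haP : a ∈ P' := by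
    have hPne : P' ≠ [] := by rintro rfl; simp at hPl
    have h2 := Option.some.inj ((hPl.symm).trans (List.getLast?_eq_getLast hPne))
    rw [h2]; exact List.getLast_mem hPne
  have hbQ : b ∈ Q' := by
    have hQne : Q' ≠ [] := by rintro rfl; simp at hQl
    have h2 := Option.some.inj ((hQl.symm).trans (List.getLast?_eq_getLast hQne))
    rw [h2]; exact List.getLast_mem hQne
  have hPX : ∀ x ∈ P', x ∈ X := fun x hx => Or.inl hx
  have hQX : ∀ x ∈ Q', x ∈ X := fun x hx => Or.inr (Or.inr hx)
  have hbic := glue_cycle A (hPc.imp fun u v h => h.2.2) hPh hPl hPnd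
    (hQc.imp fun u v h => h.2.2) hQh hQl hQnd hint hmP hmQ ham haA hmb hbA hab
  refine ⟨X, hPX a haP, hQX b hbQ, Or.inr (Or.inl rfl), hbic, ?_⟩
  rintro v (hv | hv | hv)
  · left
    obtain ⟨l', _, h1, h2, h3⟩ := suffix_path (chain_stepIn_mono hPc hPX) hPl hv
    exact rtg_of_chain h1 h2 h3
  · exact Or.inr (Or.inl hv)
  · right; right
    obtain ⟨l', _, h1, h2, h3⟩ := suffix_path (chain_stepIn_mono hQc hQX) hQl hv
    exact rtg_of_chain h1 h2 h3

end Stmt5Aux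

/-- Lemma A.3, base case n = 3. -/
theorem stmt5 [Fintype V] (A : V → V → Prop) (hirr : ∀ v : V, ¬ A v v)
    (i j k : V) (hij : i ≠ j) (hji : A j i) (hk : k ∉ ({i, j} : Set V))
    (hstep : ExactStep A {i, j} {i, j, k}) :
    ∃ X : Set V, ({i, j, k} : Set V) ⊆ X ∧ DirectedSubBlock A X ∧
      (∀ v ∈ ({i, j, k} : Set V), ReachIn A {i, j, k} v i) ∧
      (∀ v ∈ X, ReachIn A X v i) := by
  obtain ⟨k', hk', hWeq, j', hj'mem, hkj', hndp⟩ := hstep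
  have hkk : k = k' := by
    have hkmem : k ∈ ({i, j} : Set V) ∪ {k'} := by rw [← hWeq]; simp
    rcases hkmem with h | h
    · exact absurd h hk
    · simpa using h
  subst hkk
  have hki : k ≠ i := fun h => hk (by simp [h])
  have hkj : k ≠ j := fun h => hk (by simp [h])
  obtain ⟨u, hu1, hu2⟩ : ∃ u, u ∈ InSet A ({j'}ᶜ) {k} ∧
      u ∈ InSet A ({j'}ᶜ) (({i, j} : Set V) \ {j'}) := by
    by_contra h
    push_neg at h
    refine hndp (Set.eq_empty_iff_forall_notMem.2 ?_)
    intro x hx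
    exact h x hx.1 hx.2
  obtain ⟨x, hxk, hux⟩ := hu1
  obtain rfl : k = x := (by simpa using hxk : x = k).symm
  obtain ⟨y, hy, huy⟩ := hu2
  rcases ((by simpa using hj'mem : j' = i ∨ j' = j).imp Eq.symm Eq.symm) with rfl | rfl
  · -- the generating arc is A k i
    obtain rfl : j = y := by
      obtain ⟨h1, h2⟩ := hy
      simp only [Set.mem_insert_iff, Set.mem_singleton_iff] at h1
      simp only [Set.mem_singleton_iff] at h2
      have hyj : y = j := by tauto
      exact hyj.symm
    obtain ⟨huS, hrtgP⟩ := hux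
    obtain ⟨hujS, hrtgQ⟩ := huy
    obtain ⟨P, hPc, hPh, hPl, hPnd⟩ := exists_nodup_path hrtgP
    obtain ⟨Q, hQc, hQh, hQl, hQnd⟩ := exists_nodup_path hrtgQ
    have hPS : ∀ z ∈ P, z ∈ ({i}ᶜ : Set V) := mem_of_chain_stepIn hPc hPh huS
    have hQS : ∀ z ∈ Q, z ∈ ({i}ᶜ : Set V) := mem_of_chain_stepIn hQc hQh huS
    obtain ⟨w, P', Q', ⟨hP'c, hP'h, hP'l, hP'nd⟩, ⟨hQ'c, hQ'h, hQ'l, hQ'nd⟩, hint, hsubP, hsubQ⟩ :=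
      findW P.length P Q u k j le_rfl hPc hPh hPl hPnd hQc hQh hQl hQnd
    have hmP : i ∉ P' := fun h => (hPS i (hsubP i h)) rfl
    have hmQ : i ∉ Q' := fun h => (hQS i (hsubQ i h)) rfl
    obtain ⟨X, hkX, hjX, hiX, hbic, hreach⟩ :=
      assemble A hP'c hP'h hP'l hP'nd hQ'c hQ'h hQ'l hQ'nd hint hmP hmQ
        hki (Or.inl hkj') hij (Or.inr hji) hkj
    have hreach' : ∀ v ∈ X, ReachIn A X v i := by
      intro v hv
      refine ⟨hv, ?_⟩
      rcases hreach v hv with h | rfl | h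
      · exact h.tail ⟨hkX, hiX, hkj'⟩
      · exact Relation.ReflTransGen.refl
      · exact h.tail ⟨hjX, hiX, hji⟩
    refine ⟨X, ?_, ⟨⟨i, hiX, fun v hv => hreach' v hv⟩, hbic⟩, ?_, hreach'⟩
    · intro v hv
      simp only [Set.mem_insert_iff, Set.mem_singleton_iff] at hv
      rcases hv with rfl | rfl | rfl
      · exact hiX
      · exact hjX
      · exact hkX
    · intro v hv
      have hiT : i ∈ ({i, j, k} : Set V) := by simp
      have hjT : j ∈ ({i, j, k} : Set V) := by simp
      have hkT : k ∈ ({i, j, k} : Set V) := by simp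
      simp only [Set.mem_insert_iff, Set.mem_singleton_iff] at hv
      rcases hv with rfl | rfl | rfl
      · exact ⟨hiT, Relation.ReflTransGen.refl⟩
      · exact ⟨hjT, Relation.ReflTransGen.single ⟨hjT, hiT, hji⟩⟩
      · exact ⟨hkT, Relation.ReflTransGen.single ⟨hkT, hiT, hkj'⟩⟩
  · -- the generating arc is A k j
    obtain rfl : i = y := by
      obtain ⟨h1, h2⟩ := hy
      simp only [Set.mem_insert_iff, Set.mem_singleton_iff] at h1
      simp only [Set.mem_singleton_iff] at h2
      have hyi : y = i := by tauto
      exact hyi.symm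
    obtain ⟨huS, hrtgP⟩ := hux
    obtain ⟨huiS, hrtgQ⟩ := huy
    obtain ⟨P, hPc, hPh, hPl, hPnd⟩ := exists_nodup_path hrtgP
    obtain ⟨Q, hQc, hQh, hQl, hQnd⟩ := exists_nodup_path hrtgQ
    have hPS : ∀ z ∈ P, z ∈ ({j}ᶜ : Set V) := mem_of_chain_stepIn hPc hPh huS
    have hQS : ∀ z ∈ Q, z ∈ ({j}ᶜ : Set V) := mem_of_chain_stepIn hQc hQh huS
    obtain ⟨w, P', Q', ⟨hP'c, hP'h, hP'l, hP'nd⟩, ⟨hQ'c, hQ'h, hQ'l, hQ'nd⟩, hint, hsubP, hsubQ⟩ :=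
      findW P.length P Q u k i le_rfl hPc hPh hPl hPnd hQc hQh hQl hQnd
    have hmP : j ∉ P' := fun h => (hPS j (hsubP j h)) rfl
    have hmQ : j ∉ Q' := fun h => (hQS j (hsubQ j h)) rfl
    obtain ⟨X, hkX, hiX, hjX, hbic, hreach⟩ :=
      assemble A hP'c hP'h hP'l hP'nd hQ'c hQ'h hQ'l hQ'nd hint hmP hmQ
        hkj (Or.inl hkj') hij.symm (Or.inl hji) hki
    have hreach' : ∀ v ∈ X, ReachIn A X v i := by
      intro v hv
      refine ⟨hv, ?_⟩
      rcases hreach v hv with h | rfl | h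
      · exact (h.tail ⟨hkX, hjX, hkj'⟩).tail ⟨hjX, hiX, hji⟩
      · exact Relation.ReflTransGen.single ⟨hjX, hiX, hji⟩
      · exact h
    refine ⟨X, ?_, ⟨⟨i, hiX, fun v hv => hreach' v hv⟩, hbic⟩, ?_, hreach'⟩
    · intro v hv
      simp only [Set.mem_insert_iff, Set.mem_singleton_iff] at hv
      rcases hv with rfl | rfl | rfl
      · exact hiX
      · exact hjX
      · exact hkX
    · intro v hv
      have hiT : i ∈ ({i, j, k} : Set V) := by simp
      have hjT : j ∈ ({i, j, k} : Set V) := by simp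
      have hkT : k ∈ ({i, j, k} : Set V) := by simp
      simp only [Set.mem_insert_iff, Set.mem_singleton_iff] at hv
      rcases hv with rfl | rfl | rfl
      · exact ⟨hiT, Relation.ReflTransGen.refl⟩
      · exact ⟨hjT, Relation.ReflTransGen.single ⟨hjT, hiT, hji⟩⟩
      · exact ⟨hkT, (Relation.ReflTransGen.single ⟨hkT, hjT, hkj'⟩).tail ⟨hjT, hiT, hji⟩⟩
end

section
/- (Corollary A.1 of the paper.) If W ⊆ V with |W| ≥ 3 can be generated from a connected pair, then there exists X ⊆ V with W ⊆ X such that D[X] is a directed sub-block. -/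
open Set

variable {V : Type*}

section BlockHelpers
variable {A : V → V → Prop}

variable {A : V → V → Prop} {S S' X W W' : Set V} {u v : V}

lemma ustep_symm_s8 (h : UStep A W u v) : UStep A W v u :=
  ⟨h.2.1, h.1, h.2.2.1.symm, h.2.2.2.symm⟩

lemma rtg_ustep_symm (h : Relation.ReflTransGen (UStep A W) u v) :
    Relation.ReflTransGen (UStep A W) v u :=
  (@Relation.ReflTransGen.symmetric _ (UStep A W) ⟨fun _ _ hxy => ustep_symm_s8 hxy⟩).symm _ _ h

lemma rtg_ustep_mono (hsub : ∀ x, x ∈ W → x ∈ W')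
    (h : Relation.ReflTransGen (UStep A W) u v) :
    Relation.ReflTransGen (UStep A W') u v :=
  Relation.ReflTransGen.mono (r := UStep A W) (p := UStep A W') (fun a b hab => ⟨hsub _ hab.1, hsub _ hab.2.1, hab.2.2⟩) _ _ h

lemma reachIn_mono (hsub : S ⊆ S') (h : ReachIn A S u v) : ReachIn A S' u v :=
  ⟨hsub h.1, Relation.ReflTransGen.mono (r := StepIn A S) (p := StepIn A S') (fun a b hab => ⟨hsub hab.1, hsub hab.2.1, hab.2.2⟩) _ _ h.2⟩

lemma chain'_imp_mem {R R' : V → V → Prop} :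
    ∀ {l : List V}, l.Chain' R → (∀ a ∈ l, ∀ b ∈ l, R a b → R' a b) → l.Chain' R'
  | [], _, _ => List.isChain_nil
  | [_], _, _ => List.isChain_singleton _
  | a :: b :: l, h, H => by
    simp only [List.Chain', List.isChain_cons_cons] at h ⊢
    exact ⟨H a (by simp) b (by simp) h.1,
      chain'_imp_mem h.2 fun x hx y hy hxy => H x (by simp [hx]) y (by simp [hy]) hxy⟩

lemma chain'_head_rtg {R : V → V → Prop} :
    ∀ {l : List V} {c : V}, List.Chain' R (c :: l) → ∀ e ∈ c :: l, Relation.ReflTransGen R c e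
  | [], c, _, e, he => by simp at he; subst he; rfl
  | d :: t, c, h, e, he => by
    rcases List.mem_cons.1 he with rfl | he'
    · rfl
    · simp only [List.Chain', List.isChain_cons_cons] at h
      exact Relation.ReflTransGen.head h.1 (chain'_head_rtg h.2 e he')

lemma chain'_rtg_getLast {R : V → V → Prop} {l : List V} (h : l.Chain' R) {e : V}
    (he : e ∈ l) (hl : l ≠ []) : Relation.ReflTransGen R e (l.getLast hl) := by
  obtain ⟨l1, l2, rfl⟩ := List.append_of_mem he
  have hsuf : (e :: l2) <:+ l1 ++ e :: l2 := ⟨l1, rfl⟩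
  have hch := h.suffix hsuf
  have hlast : (l1 ++ e :: l2).getLast hl = (e :: l2).getLast (List.cons_ne_nil _ _) :=
    List.getLast_append_of_ne_nil _ (List.cons_ne_nil _ _)
  rw [hlast]
  exact chain'_head_rtg hch _ (List.getLast_mem _)

lemma chain'_mem_S :
    ∀ {l : List V} {c : V}, List.Chain' (StepIn A S) (c :: l) → c ∈ S → ∀ x ∈ c :: l, x ∈ S
  | [], c, _, hc, x, hx => by simp at hx; subst hx; exact hc
  | d :: t, c, h, hc, x, hx => by
    simp only [List.Chain', List.isChain_cons_cons] at h
    rcases List.mem_cons.1 hx with rfl | hx'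
    · exact hc
    · exact chain'_mem_S h.2 h.1.2.1 x hx'

lemma exists_split_first {p : V → Prop} :
    ∀ {l : List V}, (∃ x ∈ l, p x) → ∃ l1 z l2, l = l1 ++ z :: l2 ∧ p z ∧ ∀ x ∈ l1, ¬ p x
  | [], h => by simp at h
  | a :: t, h => by
    by_cases ha : p a
    · exact ⟨[], a, t, rfl, ha, by simp⟩
    · have ht : ∃ x ∈ t, p x := by
        obtain ⟨x, hx, hpx⟩ := h
        rcases List.mem_cons.1 hx with rfl | hx'
        · exact absurd hpx ha
        · exact ⟨x, hx', hpx⟩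
      obtain ⟨l1, z, l2, rfl, hz, hl1⟩ := exists_split_first ht
      exact ⟨a :: l1, z, l2, rfl, hz, by
        intro x hx
        rcases List.mem_cons.1 hx with rfl | hx'
        · exact ha
        · exact hl1 x hx'⟩

lemma dedup_chain' {R : V → V → Prop} :
    ∀ (n : ℕ) (c : V) (l : List V), l.length ≤ n → List.Chain' R (c :: l) →
    ∃ l', List.Chain' R (c :: l') ∧ (c :: l').Nodup ∧
      (c :: l').getLast (List.cons_ne_nil _ _) = (c :: l).getLast (List.cons_ne_nil _ _) ∧
      ∀ x ∈ l', x ∈ l := by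
  intro n
  induction n with
  | zero =>
    intro c l hl hch
    have : l = [] := List.eq_nil_of_length_eq_zero (Nat.le_zero.1 hl)
    subst this
    exact ⟨[], hch, by simp, rfl, by simp⟩
  | succ n ih =>
    intro c l hl hch
    by_cases hc : c ∈ l
    · obtain ⟨l1, l2, rfl⟩ := List.append_of_mem hc
      have hsuf : (c :: l2) <:+ c :: (l1 ++ c :: l2) := ⟨c :: l1, by simp⟩
      have hch2 := hch.suffix hsuf
      have hlen : l2.length ≤ n := by
        have := hl; simp [List.length_append] at this; omega
      obtain ⟨l', h1, h2, h3, h4⟩ := ih c l2 hlen hch2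
      refine ⟨l', h1, h2, ?_, fun x hx => by simp [h4 x hx]⟩
      rw [h3]
      have : c :: (l1 ++ c :: l2) = (c :: l1) ++ (c :: l2) := by simp
      rw [show (c :: (l1 ++ c :: l2)).getLast (List.cons_ne_nil _ _)
            = ((c :: l1) ++ (c :: l2)).getLast (by simp) from by congr 1
          , List.getLast_append_of_ne_nil _ (List.cons_ne_nil _ _)]
    · cases l with
      | nil => exact ⟨[], hch, by simp, rfl, by simp⟩
      | cons d t =>
        simp only [List.Chain', List.isChain_cons_cons] at hch
        have hlen : t.length ≤ n := by simp at hl; omega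
        obtain ⟨t', h1, h2, h3, h4⟩ := ih d t hlen hch.2
        refine ⟨d :: t', ?_, ?_, ?_, ?_⟩
        · simp only [List.Chain', List.isChain_cons_cons]; exact ⟨hch.1, h1⟩
        · refine List.nodup_cons.2 ⟨?_, h2⟩
          intro hcmem
          rcases List.mem_cons.1 hcmem with rfl | hc'
          · exact hc (by simp)
          · exact hc (by simp [h4 c hc'])
        · rw [List.getLast_cons (List.cons_ne_nil _ _), h3,
            List.getLast_cons (List.cons_ne_nil _ _)]
        · intro x hx
          rcases List.mem_cons.1 hx with rfl | hx'
          · simp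
          · simp [h4 x hx']

lemma reachIn_path (h : ReachIn A S u v) :
    ∃ t : List V, List.Chain' (StepIn A S) (u :: t) ∧
      (u :: t).getLast (List.cons_ne_nil _ _) = v ∧ (u :: t).Nodup ∧ ∀ x ∈ u :: t, x ∈ S := by
  obtain ⟨hu, hrtg⟩ := h
  obtain ⟨l, hch, hlast⟩ := List.exists_isChain_cons_of_relationReflTransGen hrtg
  have hch' : List.Chain' (StepIn A S) (u :: l) := hch
  obtain ⟨l', h1, h2, h3, _⟩ := dedup_chain' l.length u l le_rfl hch'
  exact ⟨l', h1, by rw [h3]; exact hlast, h2, chain'_mem_S h1 hu⟩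



def Blockish (A : V → V → Prop) (X : Set V) : Prop :=
  2 ≤ X.ncard ∧ UConnected A X ∧ ∀ v ∈ X, UConnected A (X \ {v})

lemma uconn_of_hub {X : Set V} {h0 : V} (h0X : h0 ∈ X)
    (H : ∀ u ∈ X, Relation.ReflTransGen (UStep A X) u h0) : UConnected A X :=
  ⟨⟨h0, h0X⟩, fun u hu v hv => (H u hu).trans (rtg_ustep_symm (H v hv))⟩

lemma ear_lemma [Finite V] {X : Set V} {j z : V} {I : List V}
    (hX : Blockish A X) (hj : j ∈ X) (hz : z ∈ X) (hjz : j ≠ z)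
    (hIne : I ≠ []) (hnd : (j :: I ++ [z]).Nodup) (hIX : ∀ x ∈ I, x ∉ X)
    (hch : List.Chain' (UStep A (X ∪ {x | x ∈ I})) (j :: I ++ [z])) :
    Blockish A (X ∪ {x | x ∈ I}) := by
  set X' : Set V := X ∪ {x | x ∈ I} with hX'def
  have hXsub : X ⊆ X' := Set.subset_union_left
  have hjI : j ∉ I := fun h => (List.nodup_cons.1 hnd).1 (by simp [h])
  have hzI : z ∉ I := by
    have h2 : (I ++ [z]).Nodup := (List.nodup_cons.1 hnd).2
    rw [List.nodup_append] at h2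
    intro h
    exact h2.2.2 z h z (by simp) rfl
  have hImem : ∀ x ∈ I, x ∈ X' := fun x hx => Or.inr hx
  -- all ear vertices are in X'
  have hearmem : ∀ x ∈ j :: I ++ [z], x ∈ X' := by
    intro x hx
    rcases List.mem_cons.1 hx with rfl | hx'
    · exact hXsub hj
    · rcases List.mem_append.1 hx' with h | h
      · exact hImem x h
      · simp at h; subst h; exact hXsub hz
  refine ⟨le_trans hX.1 (Set.ncard_le_ncard hXsub (Set.toFinite _)), ?_, ?_⟩
  · -- connected: hub j
    refine uconn_of_hub (hXsub hj) ?_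
    intro u hu
    rcases hu with hu | hu
    · exact rtg_ustep_mono (fun x hx => hXsub hx) (hX.2.1.2 u hu j hj)
    · exact rtg_ustep_symm (chain'_head_rtg hch u (by simp; exact Or.inr (Or.inl hu)))
  · -- deletion
    intro v hv
    rcases hv with hvX | hvI
    · -- v ∈ X
      have hvI' : v ∉ I := fun h => hIX v h hvX
      have hset : X' \ {v} = (X \ {v}) ∪ {x | x ∈ I} := by
        ext x
        simp only [Set.mem_diff, Set.mem_union, Set.mem_singleton_iff, Set.mem_setOf_eq,
          hX'def]
        constructor
        · rintro ⟨h | h, hne⟩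
          · exact Or.inl ⟨h, hne⟩
          · exact Or.inr h
        · rintro (⟨h, hne⟩ | h)
          · exact ⟨Or.inl h, hne⟩
          · exact ⟨Or.inr h, fun he => hvI' (he ▸ h)⟩
      have claim : ∀ e ∈ I, ∃ y, (y ∈ X ∧ y ≠ v) ∧
          Relation.ReflTransGen (UStep A (X' \ {v})) e y := by
        intro e he
        obtain ⟨I1, I2, rfl⟩ := List.append_of_mem he
        by_cases hvj : v = j
        · -- go forward to z
          have hsuf : (e :: I2 ++ [z]) <:+ j :: (I1 ++ e :: I2) ++ [z] :=
            ⟨j :: I1, by simp⟩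
          have hch2 := hch.suffix hsuf
          have hmem : ∀ x ∈ e :: I2 ++ [z], x ∈ X' \ {v} := by
            intro x hx
            rcases List.mem_append.1 hx with hx' | hx'
            · have hxI : x ∈ I1 ++ e :: I2 := by
                rcases List.mem_cons.1 hx' with rfl | h
                exacts [he, by simp [h]]
              refine ⟨hImem x hxI, fun hxv => hjI ?_⟩
              rw [← hvj, ← hxv]; exact hxI
            · simp at hx'; subst hx'
              exact ⟨hXsub hz, fun h => hjz ((h.trans hvj).symm)⟩
          have hch3 : List.Chain' (UStep A (X' \ {v})) (e :: I2 ++ [z]) :=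
            chain'_imp_mem hch2 fun a ha b hb hab =>
              ⟨(hmem a ha), (hmem b hb), hab.2.2⟩
          refine ⟨z, ⟨hz, fun h => hjz (h.trans hvj).symm⟩, ?_⟩
          exact chain'_head_rtg (l := I2 ++ [z]) hch3 z (by simp)
        · -- go back to j
          have hpre : (j :: I1 ++ [e]) <+: j :: (I1 ++ e :: I2) ++ [z] :=
            ⟨I2 ++ [z], by simp⟩
          have hch2 := hch.prefix hpre
          have hmem : ∀ x ∈ j :: I1 ++ [e], x ∈ X' \ {v} := by
            intro x hx
            rcases List.mem_cons.1 hx with rfl | hx'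
            · exact ⟨hXsub hj, fun h => hvj h.symm⟩
            · have hxI : x ∈ I1 ++ e :: I2 := by
                rcases List.mem_append.1 hx' with h | h
                · simp [h]
                · simp at h; subst h; exact he
              exact ⟨hImem x hxI, fun h => hIX x hxI (h ▸ hvX)⟩
          have hch3 : List.Chain' (UStep A (X' \ {v})) (j :: I1 ++ [e]) :=
            chain'_imp_mem hch2 fun a ha b hb hab =>
              ⟨(hmem a ha), (hmem b hb), hab.2.2⟩
          refine ⟨j, ⟨hj, fun h => hvj h.symm⟩, ?_⟩
          exact rtg_ustep_symm (chain'_head_rtg (l := I1 ++ [e]) hch3 e (by simp))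
      -- hub h0
      have hconX := hX.2.2 v hvX
      obtain ⟨h0, hh0⟩ : ∃ h0, h0 ∈ X ∧ h0 ≠ v := by
        by_cases hvj : v = j
        · exact ⟨z, hz, fun h => hjz (h.trans hvj).symm⟩
        · exact ⟨j, hj, fun h => hvj h.symm⟩
      have hXdel : X \ {v} ⊆ X' \ {v} := fun x hx => ⟨hXsub hx.1, hx.2⟩
      refine uconn_of_hub (X := X' \ {v}) (h0 := h0) ⟨hXsub hh0.1, hh0.2⟩ ?_
      intro u hu
      have hXpath : ∀ y, y ∈ X ∧ y ≠ v →
          Relation.ReflTransGen (UStep A (X' \ {v})) y h0 :=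
        fun y hy => rtg_ustep_mono (fun x hx => hXdel hx)
          (hconX.2 y ⟨hy.1, hy.2⟩ h0 ⟨hh0.1, hh0.2⟩)
      rcases hu.1 with huX | huI
      · exact hXpath u ⟨huX, hu.2⟩
      · obtain ⟨y, hy, hpath⟩ := claim u huI
        exact hpath.trans (hXpath y hy)
    · -- v ∈ I
      have hvX : v ∉ X := hIX v hvI
      have hXdel : X ⊆ X' \ {v} := fun x hx => ⟨hXsub hx, fun h => hvX (h ▸ hx)⟩
      obtain ⟨I1, I2, rfl⟩ := List.append_of_mem hvI
      have hndI0 : ((I1 ++ v :: I2) ++ [z]).Nodup := (List.nodup_cons.1 hnd).2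
      have hndI : (I1 ++ v :: I2).Nodup := hndI0.of_append_left
      have hvI1 : v ∉ I1 := by
        intro h
        rw [List.nodup_append] at hndI
        exact hndI.2.2 v h v (by simp) rfl
      have hvI2 : v ∉ I2 := by
        rw [List.nodup_append] at hndI
        exact (List.nodup_cons.1 hndI.2.1).1
      refine uconn_of_hub (X := X' \ {v}) (h0 := j) (hXdel hj) ?_
      intro u hu
      rcases hu.1 with huX | huI
      · exact rtg_ustep_mono (fun x hx => hXdel hx) (hX.2.1.2 u huX j hj)
      · -- u ∈ I, u ≠ v
        have hune : u ≠ v := hu.2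
        rcases List.mem_append.1 huI with hu1 | hu2
        · -- prefix j :: I1
          have hpre : (j :: I1) <+: j :: (I1 ++ v :: I2) ++ [z] := ⟨v :: I2 ++ [z], by simp⟩
          have hch2 := hch.prefix hpre
          have hmem : ∀ x ∈ j :: I1, x ∈ X' \ {v} := by
            intro x hx
            rcases List.mem_cons.1 hx with rfl | hx'
            · exact hXdel hj
            · exact ⟨hImem x (by simp [hx']), fun h => hvI1 (h ▸ hx')⟩
          have hch3 : List.Chain' (UStep A (X' \ {v})) (j :: I1) :=
            chain'_imp_mem hch2 fun a ha b hb hab => ⟨hmem a ha, hmem b hb, hab.2.2⟩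
          exact rtg_ustep_symm (chain'_head_rtg hch3 u (by simp [hu1]))
        · -- suffix from u to z, then z to j in X
          rcases List.mem_cons.1 hu2 with rfl | hu2'
          · exact absurd rfl hune
          obtain ⟨a, b, rfl⟩ := List.append_of_mem hu2'
          have hsuf : (u :: b ++ [z]) <:+ j :: (I1 ++ v :: (a ++ u :: b)) ++ [z] :=
            ⟨j :: I1 ++ v :: a, by simp⟩
          have hch2 := hch.suffix hsuf
          have hmem : ∀ x ∈ u :: b ++ [z], x ∈ X' \ {v} := by
            intro x hx
            rcases List.mem_append.1 hx with hx' | hx'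
            · have hxI2 : x ∈ a ++ u :: b := by
                rcases List.mem_cons.1 hx' with rfl | h
                · simp
                · simp [h]
              refine ⟨hImem x (by simp [hxI2]), fun h => hvI2 (h ▸ hxI2)⟩
            · simp at hx'; subst hx'
              exact hXdel hz
          have hch3 : List.Chain' (UStep A (X' \ {v})) (u :: b ++ [z]) :=
            chain'_imp_mem hch2 fun p hp q hq hpq => ⟨hmem p hp, hmem q hq, hpq.2.2⟩
          have hup : Relation.ReflTransGen (UStep A (X' \ {v})) u z :=
            chain'_head_rtg (l := b ++ [z]) hch3 z (by simp)
          exact hup.trans (rtg_ustep_mono (fun x hx => hXdel hx) (hX.2.1.2 z hz j hj))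



lemma uconn_subsingleton {X : Set V} (hne : X.Nonempty)
    (hss : ∀ a ∈ X, ∀ b ∈ X, a = b) : UConnected A X :=
  ⟨hne, fun u hu v hv => (hss u hu v hv) ▸ Relation.ReflTransGen.refl⟩

lemma pair_base {i j : V} (hij : i ≠ j) (harc : A i j ∨ A j i) :
    Blockish A ({i, j} : Set V) ∧
      ∃ r ∈ ({i, j} : Set V), ∀ v ∈ ({i, j} : Set V), ReachIn A {i, j} v r := by
  have hi : i ∈ ({i, j} : Set V) := by simp
  have hj : j ∈ ({i, j} : Set V) := by simp
  have hstep : UStep A {i, j} i j := ⟨hi, hj, hij, harc⟩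
  constructor
  · refine ⟨by rw [Set.ncard_pair hij], ?_, ?_⟩
    · refine uconn_of_hub hj ?_
      intro u hu
      rcases hu with rfl | rfl
      · exact Relation.ReflTransGen.single hstep
      · rfl
    · intro v hv
      refine uconn_subsingleton ?_ ?_
      · rcases hv with rfl | rfl
        · exact ⟨j, hj, fun h => hij h.symm⟩
        · exact ⟨i, hi, fun h => hij h⟩
      · rintro a ⟨ha, ha'⟩ b ⟨hb, hb'⟩
        simp only [Set.mem_singleton_iff] at ha' hb'
        rcases hv with rfl | rfl
        · rcases ha with rfl | rfl
          · exact absurd rfl ha'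
          · rcases hb with rfl | rfl
            · exact absurd rfl hb'
            · rfl
        · rcases ha with rfl | rfl
          · rcases hb with rfl | rfl
            · rfl
            · exact absurd rfl hb'
          · exact absurd rfl ha'
  · rcases harc with h | h
    · refine ⟨j, hj, ?_⟩
      intro v hv
      rcases hv with rfl | rfl
      · exact ⟨hi, Relation.ReflTransGen.single ⟨hi, hj, h⟩⟩
      · exact ⟨hj, Relation.ReflTransGen.refl⟩
    · refine ⟨i, hi, ?_⟩
      intro v hv
      rcases hv with rfl | rfl
      · exact ⟨hi, Relation.ReflTransGen.refl⟩
      · exact ⟨hj, Relation.ReflTransGen.single ⟨hj, hi, h⟩⟩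

lemma step_good [Finite V] (hirr : ∀ v : V, ¬ A v v) {W₀ X₀ : Set V} {k j : V}
    (hWX : W₀ ⊆ X₀) (hB : Blockish A X₀)
    (hroot0 : ∃ r ∈ X₀, ∀ v ∈ X₀, ReachIn A X₀ v r)
    (hjW : j ∈ W₀) (hAkj : A k j)
    (hndp : ¬ DynPart A {k} (W₀ \ {j}) {j}) :
    ∃ X', W₀ ∪ {k} ⊆ X' ∧ Blockish A X' ∧ ∃ r ∈ X', ∀ v ∈ X', ReachIn A X' v r := by
  by_cases hkX : k ∈ X₀
  · exact ⟨X₀, Set.union_subset hWX (by simpa using hkX), hB, hroot0⟩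
  obtain ⟨r, hrX, hroot⟩ := hroot0
  have hjX : j ∈ X₀ := hWX hjW
  set S : Set V := ({j} : Set V)ᶜ with hSdef
  have hSne : ∀ x, x ∈ S ↔ x ≠ j := by intro x; simp [hSdef]
  -- extract the witness u0 and the two ReachIn facts
  rw [DynPart, Set.eq_empty_iff_forall_notMem] at hndp
  push_neg at hndp
  obtain ⟨u0, hu0⟩ := hndp
  obtain ⟨k', hk', hu0k⟩ := hu0.1
  rw [Set.mem_singleton_iff] at hk'
  rw [hk'] at hu0k
  obtain ⟨w, hwW, hu0w⟩ := hu0.2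
  have hwX : w ∈ X₀ := hWX hwW.1
  -- simple directed paths
  obtain ⟨tP, hPch, hPlast, hPnd, hPS⟩ := reachIn_path hu0k
  obtain ⟨tQ, hQch, hQlast, hQnd, hQS⟩ := reachIn_path hu0w
  have hPlast? : (u0 :: tP).getLast? = some k := by
    rw [List.getLast?_eq_getLast (List.cons_ne_nil _ _), hPlast]
  have hkS : k ∈ S := hPS k (by rw [← hPlast]; exact List.getLast_mem _)
  have hkj : k ≠ j := (hSne k).1 hkS
  -- trim Q at the first vertex in X₀
  have hQmemX : ∃ x ∈ u0 :: tQ, x ∈ X₀ :=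
    ⟨w, by rw [← hQlast]; exact List.getLast_mem _, hwX⟩
  obtain ⟨Q1, z0, Q2, hQsplit, hz0X, hQ1X⟩ := exists_split_first hQmemX
  have hQ'pre : (Q1 ++ [z0]) <+: u0 :: tQ := ⟨Q2, by rw [hQsplit]; simp⟩
  have hQ'ch : List.Chain' (StepIn A S) (Q1 ++ [z0]) := hQch.prefix hQ'pre
  have hQ'nd : (Q1 ++ [z0]).Nodup := hQ'pre.sublist.nodup hQnd
  have hQ'S : ∀ x ∈ Q1 ++ [z0], x ∈ S := fun x hx => hQS x (hQ'pre.subset hx)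
  have hQ'last? : (Q1 ++ [z0]).getLast? = some z0 := by simp
  have hu0Q' : u0 ∈ Q1 ++ [z0] := by
    cases Q1 with
    | nil =>
      have h := congrArg List.head? hQsplit
      simp at h
      simp [h]
    | cons a t =>
      have h := congrArg List.head? hQsplit
      simp at h
      simp [h]
  -- split P at the last vertex lying on the trimmed Q
  have hPrevmem : ∃ x ∈ (u0 :: tP).reverse, x ∈ Q1 ++ [z0] := ⟨u0, by simp, hu0Q'⟩
  obtain ⟨B1, u', B2, hPrevsplit, hu'Q', hB1⟩ := exists_split_first hPrevmem
  have hPsplit : u0 :: tP = B2.reverse ++ u' :: B1.reverse := by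
    rw [← List.reverse_reverse (u0 :: tP), hPrevsplit]
    simp
  -- the directed path M from u' to k
  have hMsuf : (u' :: B1.reverse) <:+ u0 :: tP := ⟨B2.reverse, hPsplit.symm⟩
  have hMch : List.Chain' (StepIn A S) (u' :: B1.reverse) := hPch.suffix hMsuf
  have hMlast? : (u' :: B1.reverse).getLast? = some k := by
    have h := hPlast?
    rw [hPsplit, List.getLast?_append,
      List.getLast?_eq_getLast (l := u' :: B1.reverse) (List.cons_ne_nil _ _)] at h
    simp at h
    rw [List.getLast?_eq_getLast (List.cons_ne_nil _ _)]
    exact congrArg some h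
  have hMnd : (u' :: B1.reverse).Nodup := hMsuf.sublist.nodup hPnd
  have hMS : ∀ x ∈ u' :: B1.reverse, x ∈ S := fun x hx => hPS x (hMsuf.subset hx)
  have hMQ' : ∀ x ∈ B1.reverse, x ∉ Q1 ++ [z0] := fun x hx => hB1 x (List.mem_reverse.1 hx)
  -- F : the reversal of M, a backwards walk from k to u'
  set F : List V := (u' :: B1.reverse).reverse with hFdef
  have hFne : F ≠ [] := by simp [hFdef]
  have hFhead? : F.head? = some k := by rw [hFdef, List.head?_reverse]; exact hMlast?
  have hFS : ∀ x ∈ F, x ∈ S := by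
    intro x hx
    exact hMS x (by rw [hFdef] at hx; exact List.mem_reverse.1 hx)
  have hFnd : F.Nodup := by rw [hFdef, List.nodup_reverse]; exact hMnd
  have hFch : List.Chain' (fun a b => StepIn A S b a) F := by
    rw [hFdef]; exact List.isChain_reverse.2 hMch
  have hkF : k ∈ F := by
    have h := List.head?_eq_head (l := F) hFne
    rw [hFhead?] at h
    have hh : F.head hFne = k := (Option.some.inj h).symm
    exact hh ▸ List.head_mem hFne
  have mkUf : ∀ {T : Set V} {a b : V}, StepIn A S a b → a ∈ T → b ∈ T → UStep A T a b :=
    fun hab ha hb => ⟨ha, hb, fun he => hirr _ (he ▸ hab.2.2), Or.inl hab.2.2⟩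
  have mkUb : ∀ {T : Set V} {a b : V}, StepIn A S b a → a ∈ T → b ∈ T → UStep A T a b :=
    fun hab ha hb => ⟨ha, hb, fun he => hirr _ (he ▸ hab.2.2), Or.inr hab.2.2⟩
  obtain ⟨I, z, hIne, hknd, hIX, hzX, hzj, hkI, hch, hreach⟩ :
      ∃ (I : List V) (z : V), I ≠ [] ∧ (j :: I ++ [z]).Nodup ∧ (∀ x ∈ I, x ∉ X₀) ∧
        z ∈ X₀ ∧ z ≠ j ∧ k ∈ I ∧
        List.Chain' (UStep A (X₀ ∪ {x | x ∈ I})) (j :: I ++ [z]) ∧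
        (∀ e ∈ I, Relation.ReflTransGen (StepIn A (X₀ ∪ {x | x ∈ I})) e r) := by
    have hrootmono : ∀ (T : Set V), X₀ ⊆ T → ∀ y ∈ X₀,
        Relation.ReflTransGen (StepIn A T) y r := by
      intro T hT y hy
      exact Relation.ReflTransGen.mono (r := StepIn A X₀) (p := StepIn A T) (fun a b hab => ⟨hT hab.1, hT hab.2.1, hab.2.2⟩) _ _ (hroot y hy).2
    by_cases hFX : ∃ x ∈ F, x ∈ X₀
    · -- Case 1 : the ear lies entirely inside F
      obtain ⟨F1, z, F2, hFsplit, hzX, hF1X⟩ := exists_split_first hFX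
      have hF1ne : F1 ≠ [] := by
        intro h
        subst h
        have h1 := congrArg List.head? hFsplit
        rw [hFhead?] at h1
        simp at h1
        exact hkX (h1 ▸ hzX)
      have hF1head? : F1.head? = some k := by
        have h1 := congrArg List.head? hFsplit
        rw [hFhead?] at h1
        cases F1 with
        | nil => exact absurd rfl hF1ne
        | cons c t =>
          simp at h1 ⊢
          exact h1.symm
      have hkF1 : k ∈ F1 := by
        cases F1 with
        | nil => exact absurd rfl hF1ne
        | cons c t =>
          simp at hF1head?
          simp [hF1head?]
      have hsub : List.Sublist (F1 ++ [z]) F := by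
        rw [hFsplit]
        exact List.Sublist.append_left (List.cons_sublist_cons.2 (List.nil_sublist F2)) F1
      refine ⟨F1, z, hF1ne, ?_, hF1X, hzX, ?_, hkF1, ?_, ?_⟩
      · -- Nodup
        refine List.nodup_cons.2 ⟨?_, hsub.nodup hFnd⟩
        intro hj'
        exact ((hSne j).1 (hFS j (hsub.subset hj'))) rfl
      · -- z ≠ j
        exact (hSne z).1 (hFS z (by rw [hFsplit]; simp))
      · -- chain
        have hpre : (F1 ++ [z]) <+: F := ⟨F2, by rw [hFsplit]; simp⟩
        have c1 := hFch.prefix hpre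
        have cmem : ∀ x ∈ F1 ++ [z], x ∈ X₀ ∪ {x | x ∈ F1} := by
          intro x hx
          rcases List.mem_append.1 hx with h | h
          · exact Or.inr h
          · simp at h; subst h; exact Or.inl hzX
        have c2 : List.Chain' (UStep A (X₀ ∪ {x | x ∈ F1})) (F1 ++ [z]) :=
          chain'_imp_mem c1 fun a ha b hb hab => mkUb hab (cmem a ha) (cmem b hb)
        rw [List.cons_append]
        refine List.isChain_cons.2 ⟨?_, c2⟩
        intro y hy
        have hy' : y = k := by
          rw [Option.mem_def, List.head?_append, hF1head?] at hy
          simp at hy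
          exact hy.symm
        subst hy'
        exact ⟨Or.inl hjX, Or.inr hkF1, fun h => hkj h.symm, Or.inr hAkj⟩
      · -- reach
        have hMeq : u' :: B1.reverse = F2.reverse ++ z :: F1.reverse := by
          rw [← List.reverse_reverse (u' :: B1.reverse), ← hFdef, hFsplit]
          simp
        have hNsuf : (z :: F1.reverse) <:+ u' :: B1.reverse := ⟨F2.reverse, hMeq.symm⟩
        have hNch := hMch.suffix hNsuf
        have hNlast? : (z :: F1.reverse).getLast? = some k := by
          have h := hMlast?
          rw [hMeq, List.getLast?_append,
            List.getLast?_eq_getLast (l := z :: F1.reverse) (List.cons_ne_nil _ _)] at h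
          simp at h
          rw [List.getLast?_eq_getLast (List.cons_ne_nil _ _)]
          exact congrArg some h
        have hNmem : ∀ x ∈ z :: F1.reverse, x ∈ X₀ ∪ {x | x ∈ F1} := by
          intro x hx
          rcases List.mem_cons.1 hx with rfl | hx'
          · exact Or.inl hzX
          · exact Or.inr (List.mem_reverse.1 hx')
        have hNch' : List.Chain' (StepIn A (X₀ ∪ {x | x ∈ F1})) (z :: F1.reverse) :=
          chain'_imp_mem hNch fun a ha b hb hab => ⟨hNmem a ha, hNmem b hb, hab.2.2⟩
        intro e he
        have heN : e ∈ z :: F1.reverse := by simp [List.mem_reverse, he]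
        have h1 : Relation.ReflTransGen (StepIn A (X₀ ∪ {x | x ∈ F1})) e k := by
          have h2 := chain'_rtg_getLast hNch' heN (List.cons_ne_nil _ _)
          have h3 : (z :: F1.reverse).getLast (List.cons_ne_nil _ _) = k :=
            (List.getLast_eq_iff_getLast?_eq_some _).2 hNlast?
          rwa [h3] at h2
        exact h1.trans
          (Relation.ReflTransGen.head ⟨Or.inr hkF1, Or.inl hjX, hAkj⟩
            (hrootmono _ Set.subset_union_left j hjX))
    · -- Case 2 : the ear continues along the trimmed Q
      push_neg at hFX
      have hu'F : u' ∈ F := by rw [hFdef]; simp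
      have hu'X : u' ∉ X₀ := hFX u' hu'F
      have hu'mem : ∃ x ∈ Q1 ++ [z0], x = u' := ⟨u', hu'Q', rfl⟩
      obtain ⟨R1, u'', R2, hQ'split, rfl, -⟩ := exists_split_first hu'mem
      have hR2suf : (u'' :: R2) <:+ Q1 ++ [z0] := ⟨R1, hQ'split.symm⟩
      have hR2ch : List.Chain' (StepIn A S) (u'' :: R2) := hQ'ch.suffix hR2suf
      have hR2last? : (u'' :: R2).getLast? = some z0 := by
        have h := hQ'last?
        rw [hQ'split, List.getLast?_append,
          List.getLast?_eq_getLast (l := u'' :: R2) (List.cons_ne_nil _ _)] at h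
        simp at h
        rw [List.getLast?_eq_getLast (List.cons_ne_nil _ _)]
        exact congrArg some h
      have hR2ne : R2 ≠ [] := by
        intro h
        subst h
        simp at hR2last?
        exact hu'X (hR2last? ▸ hz0X)
      have hR2nd : (u'' :: R2).Nodup := hR2suf.sublist.nodup hQ'nd
      have hu'R2 : u'' ∉ R2 := (List.nodup_cons.1 hR2nd).1
      have hR2Q' : ∀ x ∈ R2, x ∈ Q1 ++ [z0] := fun x hx => hR2suf.subset (by simp [hx])
      have hz0R2 : R2.getLast hR2ne = z0 := by
        have h := hR2last?
        rw [List.getLast?_eq_getLast (List.cons_ne_nil _ _), List.getLast_cons hR2ne] at h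
        exact Option.some.inj h
      have hR2eq : R2.dropLast ++ [z0] = R2 := by
        conv_rhs => rw [← List.dropLast_append_getLast hR2ne]
        rw [hz0R2]
      have hz0drop : z0 ∉ R2.dropLast := by
        intro h
        have hnd2 : R2.Nodup := (List.nodup_cons.1 hR2nd).2
        rw [← hR2eq, List.nodup_append] at hnd2
        exact hnd2.2.2 z0 h z0 (by simp) rfl
      have hdropsub : ∀ x ∈ R2.dropLast, x ∈ R2 := fun x hx => (List.dropLast_sublist R2).subset hx
      have hdropX : ∀ x ∈ R2.dropLast, x ∉ X₀ := by
        intro x hx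
        rcases List.mem_append.1 (hR2Q' x (hdropsub x hx)) with h | h
        · exact hQ1X x h
        · simp at h; subst h; exact absurd hx hz0drop
      have hFR2disj : ∀ x ∈ F, x ∉ R2 := by
        intro x hx
        have hxM : x ∈ u'' :: B1.reverse := by rw [hFdef] at hx; exact List.mem_reverse.1 hx
        rcases List.mem_cons.1 hxM with rfl | hx'
        · exact hu'R2
        · exact fun hxR2 => hMQ' x hx' (hR2Q' x hxR2)
      have hR2S : ∀ x ∈ u'' :: R2, x ∈ S := fun x hx => hQ'S x (hR2suf.subset hx)
      have hR2memX' : ∀ x ∈ R2, x ∈ X₀ ∪ {y | y ∈ F ++ R2.dropLast} := by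
        intro x hx
        rw [← hR2eq] at hx
        rcases List.mem_append.1 hx with h | h
        · exact Or.inr (List.mem_append_right _ h)
        · simp at h; subst h; exact Or.inl hz0X
      have hFmemX' : ∀ x ∈ F, x ∈ X₀ ∪ {y | y ∈ F ++ R2.dropLast} :=
        fun x hx => Or.inr (List.mem_append_left _ hx)
      have hu'X' : u'' ∈ X₀ ∪ {y | y ∈ F ++ R2.dropLast} := hFmemX' u'' hu'F
      have hFRnd : (F ++ R2).Nodup := by
        rw [List.nodup_append]
        exact ⟨hFnd, (List.nodup_cons.1 hR2nd).2, fun x hx y hy hxy => hFR2disj x hx (hxy ▸ hy)⟩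
      refine ⟨F ++ R2.dropLast, z0, by simp [hFne], ?_, ?_, hz0X,
        (hSne z0).1 (hQ'S z0 (by simp)), List.mem_append_left _ hkF, ?_, ?_⟩
      · -- Nodup
        rw [List.cons_append, List.append_assoc, hR2eq]
        refine List.nodup_cons.2 ⟨?_, hFRnd⟩
        intro hj'
        rcases List.mem_append.1 hj' with h | h
        · exact ((hSne j).1 (hFS j h)) rfl
        · exact ((hSne j).1 (hR2S j (by simp [h]))) rfl
      · -- membership of I in complement of X₀
        intro x hx
        rcases List.mem_append.1 hx with h | h
        · exact hFX x h
        · exact hdropX x h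
      · -- chain
        rw [List.cons_append, List.append_assoc, hR2eq]
        have cF : List.Chain' (UStep A (X₀ ∪ {y | y ∈ F ++ R2.dropLast})) F :=
          chain'_imp_mem hFch fun a ha b hb hab => mkUb hab (hFmemX' a ha) (hFmemX' b hb)
        have cR : List.Chain' (UStep A (X₀ ∪ {y | y ∈ F ++ R2.dropLast})) R2 :=
          chain'_imp_mem (List.isChain_cons.1 hR2ch).2
            fun a ha b hb hab => mkUf hab (hR2memX' a ha) (hR2memX' b hb)
        have hFlast? : F.getLast? = some u'' := by
          rw [hFdef, List.getLast?_reverse]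
          simp
        have glue : ∀ x ∈ F.getLast?, ∀ y ∈ R2.head?, UStep A (X₀ ∪ {y | y ∈ F ++ R2.dropLast}) x y := by
          intro x hx y hy
          rw [hFlast?] at hx
          have hx' : x = u'' := (Option.mem_some_iff.1 hx).symm
          subst hx'
          have hstep := (List.isChain_cons.1 hR2ch).1 y hy
          exact mkUf hstep hu'X' (hR2memX' y (List.mem_of_mem_head? hy))
        have cFR : List.Chain' (UStep A (X₀ ∪ {y | y ∈ F ++ R2.dropLast})) (F ++ R2) :=
          List.isChain_append.2 ⟨cF, cR, glue⟩
        refine List.isChain_cons.2 ⟨?_, cFR⟩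
        intro y hy
        have hy' : y = k := by
          rw [Option.mem_def, List.head?_append, hFhead?] at hy
          simp at hy
          exact hy.symm
        subst hy'
        exact ⟨Or.inl hjX, Or.inr (List.mem_append_left _ hkF),
          fun h => hkj h.symm, Or.inr hAkj⟩
      · -- reach
        intro e he
        have hkreach : Relation.ReflTransGen
            (StepIn A (X₀ ∪ {y | y ∈ F ++ R2.dropLast})) k r :=
          Relation.ReflTransGen.head
            ⟨Or.inr (List.mem_append_left _ hkF), Or.inl hjX, hAkj⟩
            (hrootmono _ Set.subset_union_left j hjX)
        rcases List.mem_append.1 he with heF | heD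
        · -- e on the path towards k
          have hMmem : ∀ x ∈ u'' :: B1.reverse, x ∈ X₀ ∪ {y | y ∈ F ++ R2.dropLast} := by
            intro x hx
            exact hFmemX' x (by rw [hFdef]; exact List.mem_reverse.2 hx)
          have hMch' : List.Chain' (StepIn A (X₀ ∪ {y | y ∈ F ++ R2.dropLast}))
              (u'' :: B1.reverse) :=
            chain'_imp_mem hMch fun a ha b hb hab => ⟨hMmem a ha, hMmem b hb, hab.2.2⟩
          have heM : e ∈ u'' :: B1.reverse := by
            rw [hFdef] at heF; exact List.mem_reverse.1 heF
          have h1 := chain'_rtg_getLast hMch' heM (List.cons_ne_nil _ _)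
          have h3 : (u'' :: B1.reverse).getLast (List.cons_ne_nil _ _) = k :=
            (List.getLast_eq_iff_getLast?_eq_some _).2 hMlast?
          rw [h3] at h1
          exact h1.trans hkreach
        · -- e on the path towards z0
          have hRmem : ∀ x ∈ u'' :: R2, x ∈ X₀ ∪ {y | y ∈ F ++ R2.dropLast} := by
            intro x hx
            rcases List.mem_cons.1 hx with rfl | hx'
            · exact hu'X'
            · exact hR2memX' x hx'
          have hRch' : List.Chain' (StepIn A (X₀ ∪ {y | y ∈ F ++ R2.dropLast}))
              (u'' :: R2) :=
            chain'_imp_mem hR2ch fun a ha b hb hab => ⟨hRmem a ha, hRmem b hb, hab.2.2⟩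
          have heR : e ∈ u'' :: R2 := by simp [hdropsub e heD]
          have h1 := chain'_rtg_getLast hRch' heR (List.cons_ne_nil _ _)
          have h3 : (u'' :: R2).getLast (List.cons_ne_nil _ _) = z0 :=
            (List.getLast_eq_iff_getLast?_eq_some _).2 hR2last?
          rw [h3] at h1
          exact h1.trans (hrootmono _ Set.subset_union_left z0 hz0X)
  -- assemble via the ear lemma
  refine ⟨X₀ ∪ {x | x ∈ I}, ?_,
    ear_lemma hB hjX hzX (fun h => hzj h.symm) hIne hknd hIX hch, r, Or.inl hrX, ?_⟩
  · intro x hx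
    rcases hx with hxW | hxk
    · exact Or.inl (hWX hxW)
    · simp at hxk; subst hxk; exact Or.inr hkI
  · intro v hv
    rcases hv with hvX | hvI
    · exact reachIn_mono Set.subset_union_left (hroot v hvX)
    · exact ⟨Or.inr hvI, hreach v hvI⟩

end BlockHelpers

/-- Corollary A.1. -/
theorem stmt8 [Fintype V] (A : V → V → Prop) (hirr : ∀ v : V, ¬ A v v)
    (W : Set V) (hWcard : 3 ≤ W.ncard) (hgen : GeneratedFromPair A W) :
    ∃ X : Set V, W ⊆ X ∧ DirectedSubBlock A X := by
  obtain ⟨P0, hP0, hchain⟩ := hgen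
  have key : ∀ W₁, Relation.ReflTransGen (ExactStep A) P0 W₁ →
      ∃ X, W₁ ⊆ X ∧ Blockish A X ∧ ∃ r ∈ X, ∀ v ∈ X, ReachIn A X v r := by
    intro W₁ h
    induction h with
    | refl =>
      obtain ⟨i, j, hij, rfl, harc⟩ := hP0
      obtain ⟨hb, hr⟩ := pair_base hij harc
      exact ⟨{i, j}, subset_rfl, hb, hr⟩
    | tail hsteps hstep ih =>
      obtain ⟨X₀, hWX, hB, hroot⟩ := ih
      obtain ⟨k, hkW, rfl, j, hjW, hAkj, hndp⟩ := hstep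
      exact step_good hirr hWX hB hroot hjW hAkj hndp
  obtain ⟨X, hWsub, hBX, r, hrX, hroot⟩ := key W hchain
  exact ⟨X, hWsub, ⟨r, hrX, fun v hv => hroot v hv⟩,
    le_trans hWcard (Set.ncard_le_ncard hWsub (Set.toFinite X)),
    hBX.2.1, hBX.2.2⟩
end

section
/- (Lemma A.5 of the paper.) Let X ⊆ V be such that D[X] is a directed sub-block, let W ⊊ X with |W| ≥ 2, and let i ∈ W be such that i is reachable in D[W] from every other vertex of W and i is reachable in D[X] from every other vertex of X. Then there exists k ∈ X ∖ W such that W ∪ {k} is obtained from W by one exact generation step and i is reachable in D[W ∪ {k}] from every other vertex of W ∪ {k}. -/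
open Set

variable {V : Type*}

private lemma reachIn_mono_s9 {A : V → V → Prop} {S T : Set V} (h : S ⊆ T) {u v : V}
    (hr : ReachIn A S u v) : ReachIn A T u v :=
  ⟨h hr.1, Relation.ReflTransGen.mono (p := StepIn A T) (fun _ _ hxy => ⟨h hxy.1, h hxy.2.1, hxy.2.2⟩) _ _ hr.2⟩

private lemma reachIn_end_mem {A : V → V → Prop} {S : Set V} {u v : V}
    (h : ReachIn A S u v) : v ∈ S := by
  obtain ⟨hu, hr⟩ := h
  induction hr with
  | refl => exact hu
  | tail _ h ih => exact h.2.1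

/-- From a path into `W` starting outside `W`, extract a boundary arc. -/
private lemma exists_boundary {A : V → V → Prop} {X W : Set V} {u v : V}
    (h : Relation.ReflTransGen (StepIn A X) u v) (hv : v ∈ W) :
    u ∉ W → ∃ k j, k ∈ X ∧ k ∉ W ∧ j ∈ W ∧ A k j := by
  induction h using Relation.ReflTransGen.head_induction_on with
  | refl => intro hu; exact absurd hv hu
  | @head a c hac hcb ih =>
    intro ha
    by_cases hc : c ∈ W
    · exact ⟨a, c, hac.1, ha, hc, hac.2.2⟩
    · exact ih hc

/-- First hit of a set `F` along an undirected path, with the crossing edge. -/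
private lemma ustep_first_hit {A : V → V → Prop} {S F : Set V} {u v : V}
    (h : Relation.ReflTransGen (UStep A S) u v) (hv : v ∈ F) :
    u ∉ F → ∃ a b, a ∉ F ∧ b ∈ F ∧ UStep A S a b := by
  induction h using Relation.ReflTransGen.head_induction_on with
  | refl => intro hu; exact absurd hv hu
  | @head a c hac hcb ih =>
    intro ha
    by_cases hc : c ∈ F
    · exact ⟨a, c, ha, hc, hac⟩
    · exact ih hc

/-- Exit lemma: if `n` cannot reach `W \ {j}` inside `X \ {j}`, then any path
from `n` to `i ∈ W` in `X` yields, before leaving `X \ {j}`, a vertex `k`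
reachable from `n` in `X \ {j}` with an arc into `j`. -/
private lemma exit_lemma {A : V → V → Prop} {X W : Set V} {j i : V} {n : V}
    (h : Relation.ReflTransGen (StepIn A X) n i) (hiW : i ∈ W) (hiX : i ∈ X) :
    n ≠ j → (¬ ∃ w ∈ W \ {j}, ReachIn A (X \ {j}) n w) →
    ∃ k, k ∉ W ∧ A k j ∧ ReachIn A (X \ {j}) n k := by
  induction h using Relation.ReflTransGen.head_induction_on with
  | refl =>
    intro hnj hnF
    exact absurd ⟨i, ⟨hiW, by simpa using hnj⟩, ⟨⟨hiX, by simpa using hnj⟩, .refl⟩⟩ hnF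
  | @head a c hac hcb ih =>
    intro hnj hnF
    obtain ⟨haX, hcX, hAac⟩ := hac
    have haXj : a ∈ X \ ({j} : Set V) := ⟨haX, by simpa using hnj⟩
    by_cases hcj : c = j
    · refine ⟨a, fun haW => hnF ⟨a, ⟨haW, by simpa using hnj⟩, ⟨haXj, .refl⟩⟩,
        hcj ▸ hAac, ⟨haXj, .refl⟩⟩
    · have hcXj : c ∈ X \ ({j} : Set V) := ⟨hcX, by simpa using hcj⟩
      have hstep : StepIn A (X \ {j}) a c := ⟨haXj, hcXj, hAac⟩
      have hcF : ¬ ∃ w ∈ W \ {j}, ReachIn A (X \ {j}) c w := by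
        rintro ⟨w, hw, hr⟩
        exact hnF ⟨w, hw, ⟨haXj, hr.2.head hstep⟩⟩
      obtain ⟨k, hkW, hAkj, hreach⟩ := ih hcj hcF
      exact ⟨k, hkW, hAkj, ⟨haXj, hreach.2.head hstep⟩⟩

/-- Lemma A.5. -/
theorem stmt9 [Fintype V] (A : V → V → Prop) (hirr : ∀ v : V, ¬ A v v)
    (X W : Set V) (i : V)
    (hX : DirectedSubBlock A X) (hWX : W ⊂ X) (hWcard : 2 ≤ W.ncard) (hiW : i ∈ W)
    (hreachW : ∀ v ∈ W, ReachIn A W v i)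
    (hreachX : ∀ v ∈ X, ReachIn A X v i) :
    ∃ k ∈ X \ W, ExactStep A W (W ∪ {k}) ∧
      ∀ v ∈ W ∪ {k}, ReachIn A (W ∪ {k}) v i := by
  classical
  obtain ⟨x0, hx0X, hx0W⟩ := exists_of_ssubset hWX
  obtain ⟨k1, j1, hk1X, hk1W, hj1W, hA1⟩ :=
    exists_boundary (W := W) (hreachX x0 hx0X).2 hiW hx0W
  have hiX : i ∈ X := hWX.1 hiW
  have hj1X : j1 ∈ X := hWX.1 hj1W
  obtain ⟨-, hcard3, hconnX, hbicon⟩ := hX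
  have hsub : X \ ({j1} : Set V) ⊆ ({j1} : Set V)ᶜ := fun x hx => hx.2
  -- key claim: a suitable pair (k, j1) with a witness u for non-partition
  have key : ∃ k, k ∈ X ∧ k ∉ W ∧ A k j1 ∧
      ∃ u, ReachIn A ({j1} : Set V)ᶜ u k ∧
        ∃ w ∈ W \ {j1}, ReachIn A ({j1} : Set V)ᶜ u w := by
    by_cases hk1F : ∃ w ∈ W \ {j1}, ReachIn A (X \ {j1}) k1 w
    · obtain ⟨w, hw, hr⟩ := hk1F
      have hk1j1 : k1 ≠ j1 := fun h => hk1W (h ▸ hj1W)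
      exact ⟨k1, hk1X, hk1W, hA1,
        k1, ⟨by simpa using hk1j1, .refl⟩, w, hw, reachIn_mono_s9 hsub hr⟩
    · -- use biconnectivity of X \ {j1}
      obtain ⟨w0, hw0W, hw0j1⟩ := Set.exists_ne_of_one_lt_ncard hWcard j1
      have hk1j1 : k1 ≠ j1 := fun h => hk1W (h ▸ hj1W)
      have hk1m : k1 ∈ X \ ({j1} : Set V) := ⟨hk1X, by simpa using hk1j1⟩
      have hw0m : w0 ∈ X \ ({j1} : Set V) := ⟨hWX.1 hw0W, by simpa using hw0j1⟩
      have hw0F : w0 ∈ {v | ∃ w ∈ W \ {j1}, ReachIn A (X \ {j1}) v w} :=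
        ⟨w0, ⟨hw0W, by simpa using hw0j1⟩, ⟨hw0m, .refl⟩⟩
      obtain ⟨-, hconn⟩ := hbicon j1 hj1X
      have hupath := hconn k1 hk1m w0 hw0m
      obtain ⟨a, b, haF, hbF, haS, hbS, hab, hor⟩ :=
        ustep_first_hit (F := {v | ∃ w ∈ W \ {j1}, ReachIn A (X \ {j1}) v w})
          hupath hw0F hk1F
      obtain ⟨w, hw, hrb⟩ := hbF
      rcases hor with hAab | hAba
      · exact absurd ⟨w, hw, ⟨haS, hrb.2.head ⟨haS, hbS, hAab⟩⟩⟩ haF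
      · have haj1 : a ≠ j1 := by simpa using haS.2
        obtain ⟨k, hkW, hAkj1, hra⟩ :=
          exit_lemma (W := W) (hreachX a haS.1).2 hiW hiX haj1 haF
        have hkX : k ∈ X := (reachIn_end_mem hra).1
        refine ⟨k, hkX, hkW, hAkj1, b, ?_, w, hw, reachIn_mono_s9 hsub hrb⟩
        exact ⟨hsub hbS, ((reachIn_mono_s9 hsub hra).2.head ⟨hsub hbS, hsub haS, hAba⟩)⟩
  obtain ⟨k, hkX, hkW, hAkj1, u, hu1, w, hw, hu2⟩ := key
  refine ⟨k, ⟨hkX, hkW⟩, ⟨k, hkW, rfl, j1, hj1W, hAkj1, ?_⟩, ?_⟩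
  · intro hdp
    have hmem : u ∈ InSet A ({j1} : Set V)ᶜ {k} ∩ InSet A ({j1} : Set V)ᶜ (W \ {j1}) :=
      ⟨⟨k, rfl, hu1⟩, ⟨w, hw, hu2⟩⟩
    rw [DynPart] at hdp
    rw [hdp] at hmem
    exact hmem
  · intro v hv
    rcases hv with hvW | hvk
    · exact reachIn_mono_s9 Set.subset_union_left (hreachW v hvW)
    · have hvk : v = k := hvk
      subst hvk
      have hji : Relation.ReflTransGen (StepIn A (W ∪ {v})) j1 i :=
        Relation.ReflTransGen.mono (p := StepIn A (W ∪ {v})) (fun _ _ h => ⟨Or.inl h.1, Or.inl h.2.1, h.2.2⟩) _ _ (hreachW j1 hj1W).2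
      exact ⟨Or.inr rfl, hji.head ⟨Or.inr rfl, Or.inl hj1W, hAkj1⟩⟩
end

section
/- (Lemma A.2 of the paper.) If X ⊆ V is such that D[X] is a directed sub-block, then there exist i, j ∈ X with (j, i) ∈ A such that X can be generated from the connected pair {i, j}. (Note |X| ≥ 3, since the underlying graph of D[X] is biconnected.) -/
open Set

variable {V : Type*}

lemma exitLemma {rel : V → V → Prop} {B : Set V} {v : V} (hv : v ∉ B) :
    ∀ {u}, Relation.ReflTransGen rel u v → u ∈ B →
    ∃ b c, b ∈ B ∧ c ∉ B ∧ rel b c ∧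
      Relation.ReflTransGen (fun a a' => rel a a' ∧ a ∈ B ∧ a' ∈ B) u b := by
  intro u h
  induction h using Relation.ReflTransGen.head_induction_on with
  | refl => intro hu; exact absurd hu hv
  | head hstep htail ih =>
    intro hu
    rename_i a c
    by_cases hc : c ∈ B
    · obtain ⟨b, c', hb, hc', hrel, hpre⟩ := ih hc
      exact ⟨b, c', hb, hc', hrel, Relation.ReflTransGen.head ⟨hstep, hu, hc⟩ hpre⟩
    · exact ⟨_, _, hu, hc, hstep, Relation.ReflTransGen.refl⟩


/-- Key step: given `W ⊊ X` containing two distinct vertices `r, j0`, with all of `X`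
reaching `r` inside `X` and `X` minus any vertex underlying-connected, there is a good
arc into `W`. -/
lemma keyStep (A : V → V → Prop) (X : Set V) (r j0 : V)
    (hreach : ∀ v ∈ X, ReachIn A X v r)
    (hdel : ∀ v ∈ X, UConnected A (X \ {v}))
    (W : Set V) (hWX : W ⊆ X) (hrW : r ∈ W) (hj0W : j0 ∈ W) (hrj : r ≠ j0)
    (hne : (X \ W).Nonempty) :
    ∃ k, k ∉ W ∧ k ∈ X ∧ ∃ j ∈ W, A k j ∧ ¬ DynPart A {k} (W \ {j}) {j} := by
  obtain ⟨v0, hv0X, hv0W⟩ := hne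
  -- entry arc (k0, j) into W
  have hrW' : r ∉ (Wᶜ : Set V) := by simpa using hrW
  obtain ⟨k0, j, hk0W, hjW', hstep, -⟩ :=
    exitLemma (B := Wᶜ) hrW' (hreach v0 hv0X).2 hv0W
  have hjW : j ∈ W := by simpa using hjW'
  obtain ⟨hk0X, hjX, hAk0j⟩ := hstep
  have hk0W : k0 ∉ W := hk0W
  have hk0j : k0 ≠ j := fun h => hk0W (h ▸ hjW)
  -- the reachable-to `W \ {j}` set in `D − j`
  set I : Set V := InSet A ({j} : Set V)ᶜ (W \ {j}) with hI
  have hWI : ∀ w ∈ W, w ≠ j → w ∈ I :=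
    fun w hw hwj => ⟨w, ⟨hw, hwj⟩, by simpa using hwj, Relation.ReflTransGen.refl⟩
  have notDyn : ∀ k, k ≠ j → k ∈ I → ¬ DynPart A {k} (W \ {j}) {j} := by
    intro k hkj hkI hdyn
    have hk : k ∈ InSet A ({j} : Set V)ᶜ {k} ∩ I :=
      ⟨⟨k, rfl, by simpa using hkj, Relation.ReflTransGen.refl⟩, hkI⟩
    rw [DynPart] at hdyn
    exact absurd hdyn (by rw [Set.eq_empty_iff_forall_notMem]; push_neg; exact ⟨k, hk⟩)
  by_cases hk0I : k0 ∈ I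
  · exact ⟨k0, hk0W, hk0X, j, hjW, hAk0j, notDyn k0 hk0j hk0I⟩
  -- blocked set B
  set B : Set V := {v | v ∈ X ∧ v ≠ j ∧ v ∉ I} with hB
  have hclos : ∀ b ∈ B, ∀ c, StepIn A X b c → c = j ∨ c ∈ B := by
    rintro b ⟨hbX, hbj, hbI⟩ c ⟨-, hcX, hAbc⟩
    by_cases hcj : c = j
    · exact Or.inl hcj
    · refine Or.inr ⟨hcX, hcj, fun hcI => hbI ?_⟩
      obtain ⟨w, hw, hcS, hrtg⟩ := hcI
      exact ⟨w, hw, by simpa using hbj,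
        Relation.ReflTransGen.head ⟨by simpa using hbj, by simpa using hcj, hAbc⟩ hrtg⟩
  have hk0B : k0 ∈ B := ⟨hk0X, hk0j, hk0I⟩
  -- a vertex of W other than j
  obtain ⟨w0, hw0W, hw0j⟩ : ∃ w0 ∈ W, w0 ≠ j := by
    by_cases h : r = j
    · exact ⟨j0, hj0W, fun hh => hrj (h ▸ hh ▸ rfl)⟩
    · exact ⟨r, hrW, h⟩
  have hw0I : w0 ∈ I := hWI w0 hw0W hw0j
  have hw0B : w0 ∉ B := fun h => h.2.2 hw0I
  -- crossing undirected edge c → b into B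
  obtain ⟨-, hUconn⟩ := hdel j hjX
  have hupath := hUconn k0 ⟨hk0X, by simpa using hk0j⟩ w0 ⟨hWX hw0W, by simpa using hw0j⟩
  obtain ⟨b, c, hbB, hcB, hbc, -⟩ := exitLemma (B := B) hw0B hupath hk0B
  obtain ⟨hbX', hcX', hbcne, hor⟩ := hbc
  have hcj : c ≠ j := by simpa using hcX'.2
  have hAcb : A c b := by
    rcases hor with h | h
    · exfalso
      rcases hclos b hbB c ⟨hbB.1, hcX'.1, h⟩ with h' | h'
      · exact hcj h'
      · exact hcB h'
    · exact h
  have hcI : c ∈ I := by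
    by_contra hcI
    exact hcB ⟨hcX'.1, hcj, hcI⟩
  -- from b, follow path to r; it exits B only via j
  have hrB : r ∉ B := by
    rintro ⟨-, hrj', hrI⟩
    exact hrI (hWI r hrW hrj')
  obtain ⟨k, j', hkB, hj'B, hstep', hpre⟩ := exitLemma (B := B) hrB (hreach b hbB.1).2 hbB
  have hj'j : j' = j := by
    rcases hclos k hkB j' hstep' with h | h
    · exact h
    · exact absurd h hj'B
  rw [hj'j] at hstep'
  have hkW : k ∉ W := by
    intro hkW
    exact hkB.2.2 (hWI k hkW hkB.2.1)
  -- witness: c reaches k avoiding j, and c ∈ I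
  have hck : Relation.ReflTransGen (StepIn A ({j} : Set V)ᶜ) c k := by
    refine Relation.ReflTransGen.head ⟨by simpa using hcj, by simpa using hbB.2.1, hAcb⟩ ?_
    refine Relation.ReflTransGen.mono ?_ _ _ hpre
    rintro a a' ⟨⟨-, -, hA⟩, haB, ha'B⟩
    exact ⟨by simpa using haB.2.1, by simpa using ha'B.2.1, hA⟩
  refine ⟨k, hkW, hkB.1, j, hjW, hstep'.2.2, ?_⟩
  intro hdyn
  have hc : c ∈ InSet A ({j} : Set V)ᶜ {k} ∩ I :=
    ⟨⟨k, rfl, by simpa using hcj, hck⟩, hcI⟩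
  rw [DynPart] at hdyn
  rw [Set.eq_empty_iff_forall_notMem] at hdyn
  exact hdyn c hc

lemma grow [Fintype V] (A : V → V → Prop) (X : Set V) (r j0 : V)
    (hreach : ∀ v ∈ X, ReachIn A X v r)
    (hdel : ∀ v ∈ X, UConnected A (X \ {v})) (hrj : r ≠ j0) :
    ∀ n (W : Set V), W ⊆ X → r ∈ W → j0 ∈ W → (X \ W).ncard = n →
      Relation.ReflTransGen (ExactStep A) W X := by
  intro n
  induction n with
  | zero =>
    intro W hWX hrW hjW hcard
    have h0 : X \ W = ∅ := ((Set.ncard_eq_zero (Set.toFinite _)).mp hcard)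
    have : W = X := Set.Subset.antisymm hWX (Set.diff_eq_empty.mp h0)
    exact this ▸ Relation.ReflTransGen.refl
  | succ n ih =>
    intro W hWX hrW hjW hcard
    have hne : (X \ W).Nonempty := by
      rw [Set.nonempty_iff_ne_empty]
      intro h
      rw [h, Set.ncard_empty] at hcard
      omega
    obtain ⟨k, hkW, hkX, j, hjW', hAkj, hnd⟩ :=
      keyStep A X r j0 hreach hdel W hWX hrW hjW hrj hne
    have hstep : ExactStep A W (W ∪ {k}) := ⟨k, hkW, rfl, j, hjW', hAkj, hnd⟩
    refine Relation.ReflTransGen.head hstep (ih (W ∪ {k}) ?_ (Or.inl hrW) (Or.inl hjW) ?_)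
    · exact Set.union_subset hWX (by simpa using hkX)
    · have h1 : X \ (W ∪ {k}) = (X \ W) \ {k} := by rw [← Set.diff_diff]
      rw [h1, Set.ncard_diff_singleton_of_mem (show k ∈ X \ W from ⟨hkX, hkW⟩), hcard]; omega

/-- Lemma A.2. -/
theorem stmt10 [Fintype V] (A : V → V → Prop) (hirr : ∀ v : V, ¬ A v v)
    (X : Set V) (hX : DirectedSubBlock A X) :
    3 ≤ X.ncard ∧ ∃ i ∈ X, ∃ j ∈ X, i ≠ j ∧ A j i ∧
      Relation.ReflTransGen (ExactStep A) {i, j} X := by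
  obtain ⟨⟨r, hrX, hreach⟩, h3, -, hdel⟩ := hX
  refine ⟨h3, ?_⟩
  obtain ⟨v, hvX, hvr⟩ := Set.exists_ne_of_one_lt_ncard (s := X) (by omega) r
  rcases (hreach v hvX).2.cases_tail with h | ⟨j0, -, hstep⟩
  · exact absurd h.symm hvr
  obtain ⟨hj0X, -, hAj0r⟩ := hstep
  have hrj : r ≠ j0 := fun h => hirr r (h ▸ hAj0r)
  refine ⟨r, hrX, j0, hj0X, hrj, hAj0r, ?_⟩
  exact grow A X r j0 hreach hdel hrj _ {r, j0}
    (by rintro x (rfl | rfl) <;> assumption) (Or.inl rfl) (Or.inr rfl) rfl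
end
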